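/- arXiv:1903.00176 — 7 statements merged into one kernel-verified Lean document; each statement's English description precedes it below -/
import Mathlib

section
/- Let t > s > 0 be positive integers and let t ≥ u ≥ s. Suppose {p_k^{(t,s)}}_{k≥0} and {q_ℓ^{(t,s)}}_{ℓ≥0} are families of monic polynomials (p_k of degree k, q_ℓ of degree ℓ) satisfying the bi-orthogonality relation ∫∫_{ℝ²} p_k^{(t,s)}(y) κ_{t−s}(y−x) q_ℓ^{(t,s)}(x) w_{N(s−1),1}(x) dx dy = h_ℓ^{(t,s)} δ_{k,ℓ} with positive constants h_ℓ^{(t,s)}. Define P_k^{(t,u,s)}(z) = ∫_ℝ p_k^{(t,s)}(y) κ_{t−u}(y−z) dy for s ≤ u < t and P_k^{(t,t,s)}(z) = p_k^{(t,s)}(z); and Q_ℓ^{(t,u,s)}(z) = ∫_ℝ κ_{u−s}(z−x) q_ℓ^{(t,s)}(x) w_{N(s−1),1}(x) dx for s < u ≤ t and Q_ℓ^{(t,s,s)}(z) = q_ℓ^{(t,s)}(z) w_{N(s−1),1}(z). Then ∫_ℝ P_k^{(t,u,s)}(z) Q_ℓ^{(t,u,s)}(z) dz = h_ℓ^{(t,s)}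 δ_{k,ℓ} for all k,ℓ ≥ 0. -/
open MeasureTheory

/-- The gamma weight `w_{a,b}(x) = b^{a+1}/Γ(a+1) · x^a e^{-bx}` for `x > 0`,
and `0` otherwise. -/
noncomputable def w (a b x : ℝ) : ℝ :=
  if 0 < x then b ^ (a + 1) / Real.Gamma (a + 1) * x ^ a * Real.exp (-(b * x)) else 0

/-- `κ_τ(x) := w_{Nτ-1,1}(x)`. -/
noncomputable def kappa (N : ℕ) (τ : ℝ) (x : ℝ) : ℝ :=
  w ((N : ℝ) * τ - 1) 1 x

lemma w_of_nonpos {a b x : ℝ} (hx : x ≤ 0) : w a b x = 0 := by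
  simp [w, not_lt.mpr hx]

lemma integrable_pow_mul_w (i : ℕ) {a : ℝ} (ha : 0 ≤ a) :
    Integrable (fun x => x ^ i * w a 1 x) := by
  have hEq : (fun x : ℝ => x ^ i * w a 1 x) =
      Set.indicator (Set.Ioi 0) (fun x =>
        (1 : ℝ) ^ (a+1) / Real.Gamma (a+1) * (Real.exp (-x) * x ^ (a + i + 1 - 1))) := by
    funext x
    by_cases hx : 0 < x
    · simp only [Set.indicator_of_mem (Set.mem_Ioi.mpr hx), w, if_pos hx]
      rw [show a + ↑i + 1 - 1 = a + ↑i by ring, Real.rpow_add hx, Real.rpow_natCast]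
      rw [Real.one_rpow, one_mul]
      ring
    · simp [Set.indicator_of_notMem, hx, w]
  rw [hEq, integrable_indicator_iff measurableSet_Ioi]
  exact (Real.GammaIntegral_convergent (by positivity : (0:ℝ) < a + i + 1)).const_mul _

lemma integrable_poly_mul_w (r : Polynomial ℝ) {a : ℝ} (ha : 0 ≤ a) :
    Integrable (fun x => r.eval x * w a 1 x) := by
  have hEq : (fun x : ℝ => r.eval x * w a 1 x) =
      fun x => ∑ j ∈ Finset.range (r.natDegree + 1), r.coeff j * (x ^ j * w a 1 x) := by
    funext x
    rw [Polynomial.eval_eq_sum_range, Finset.sum_mul]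
    simp [mul_assoc]
  rw [hEq]
  exact integrable_finset_sum _ fun j _ => ((integrable_pow_mul_w j ha).const_mul _)

lemma real_beta {a b : ℝ} (ha : 0 ≤ a) (hb : 0 ≤ b) :
    (∫ v in (0:ℝ)..1, v ^ b * (1 - v) ^ a)
      = Real.Gamma (b+1) * Real.Gamma (a+1) / Real.Gamma (a+b+2) := by
  have key := Complex.Gamma_mul_Gamma_eq_betaIntegral
    (s := ((b+1 : ℝ) : ℂ)) (t := ((a+1 : ℝ) : ℂ)) (by simp; linarith) (by simp; linarith)
  have hbeta : Complex.betaIntegral ((b+1 : ℝ) : ℂ) ((a+1 : ℝ) : ℂ)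
      = ((∫ v in (0:ℝ)..1, v ^ b * (1 - v) ^ a : ℝ) : ℂ) := by
    rw [Complex.betaIntegral, ← intervalIntegral.integral_ofReal]
    apply intervalIntegral.integral_congr
    intro x hx
    rw [Set.uIcc_of_le (by norm_num : (0:ℝ) ≤ 1)] at hx
    have hx0 : (0:ℝ) ≤ x := hx.1
    have hx1 : (0:ℝ) ≤ 1 - x := by linarith [hx.2]
    push_cast
    rw [add_sub_cancel_right, add_sub_cancel_right, ← Complex.ofReal_cpow hx0,
      show ((1:ℂ) - ↑x) = ((1 - x : ℝ) : ℂ) by push_cast; ring, ← Complex.ofReal_cpow hx1]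
  rw [hbeta] at key
  have h1 : ((b+1 : ℝ) : ℂ) + ((a+1 : ℝ) : ℂ) = ((a+b+2 : ℝ) : ℂ) := by push_cast; ring
  rw [h1, Complex.Gamma_ofReal, Complex.Gamma_ofReal, Complex.Gamma_ofReal] at key
  have key2 : Real.Gamma (b+1) * Real.Gamma (a+1)
      = Real.Gamma (a+b+2) * ∫ v in (0:ℝ)..1, v ^ b * (1 - v) ^ a := by
    exact_mod_cast key
  have hne : Real.Gamma (a+b+2) ≠ 0 :=
    ne_of_gt (Real.Gamma_pos_of_pos (by linarith))
  rw [eq_div_iff hne]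
  linarith [key2]

lemma w_conv {a b : ℝ} (ha : 0 ≤ a) (hb : 0 ≤ b) (y x : ℝ) :
    (∫ z : ℝ, w a 1 (y - z) * w b 1 (z - x)) = w (a + b + 1) 1 (y - x) := by
  set c := y - x with hc
  have step1 : (∫ z : ℝ, w a 1 (y - z) * w b 1 (z - x))
      = ∫ z : ℝ, w a 1 (c - z) * w b 1 z := by
    rw [← integral_add_right_eq_self (μ := volume)
      (fun z => w a 1 (y - z) * w b 1 (z - x)) x]
    congr 1; funext z
    rw [show y - (z + x) = c - z by rw [hc]; ring, add_sub_cancel_right]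
  rw [step1]
  by_cases hcp : 0 < c
  · have hsupp : Function.support (fun z : ℝ => w a 1 (c - z) * w b 1 z) ⊆ Set.Ioo 0 c := by
      intro z hz
      simp only [Function.mem_support] at hz
      by_contra hmem
      rw [Set.mem_Ioo, not_and_or] at hmem
      rcases hmem with h1 | h2
      · rw [w_of_nonpos (le_of_not_gt h1), mul_zero] at hz; exact hz rfl
      · rw [w_of_nonpos (by linarith [le_of_not_gt h2] : c - z ≤ 0), zero_mul] at hz
        exact hz rfl
    have hind : (fun z : ℝ => w a 1 (c - z) * w b 1 z)
        = Set.indicator (Set.Ioo 0 c) (fun z => w a 1 (c - z) * w b 1 z) :=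
      (Set.indicator_eq_self.mpr hsupp).symm
    rw [hind, integral_indicator measurableSet_Ioo]
    have hΓa := Real.Gamma_pos_of_pos (by linarith : (0:ℝ) < a + 1)
    have hΓb := Real.Gamma_pos_of_pos (by linarith : (0:ℝ) < b + 1)
    have hΓab := Real.Gamma_pos_of_pos (by linarith : (0:ℝ) < a + b + 1 + 1)
    have heq : Set.EqOn (fun z : ℝ => w a 1 (c - z) * w b 1 z)
        (fun z => (1 / Real.Gamma (a+1)) * (1 / Real.Gamma (b+1)) * Real.exp (-c)
          * (z ^ b * (c - z) ^ a)) (Set.Ioo 0 c) := by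
      intro z hz
      have h1 : 0 < z := hz.1
      have h2 : 0 < c - z := by simp [hz.2, sub_pos]
      simp only [w, if_pos h1, if_pos h2, Real.one_rpow, one_mul]
      rw [show -(c-z) = z - c by ring, Real.exp_sub, Real.exp_neg, Real.exp_neg]
      field_simp
    rw [setIntegral_congr_fun measurableSet_Ioo heq]
    rw [integral_const_mul, ← integral_Ioc_eq_integral_Ioo,
      ← intervalIntegral.integral_of_le (le_of_lt hcp)]
    have hsub : (∫ z in (0:ℝ)..c, z ^ b * (c - z) ^ a)
        = c * ∫ v in (0:ℝ)..1, (c*v) ^ b * (c - c*v) ^ a := by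
      have h := intervalIntegral.mul_integral_comp_mul_left
        (f := fun z => z ^ b * (c - z) ^ a) (c := c) (a := 0) (b := 1)
      simp only [mul_zero, mul_one] at h
      exact h.symm
    have hsub2 : (∫ v in (0:ℝ)..1, (c*v) ^ b * (c - c*v) ^ a)
        = c ^ (a + b) * ∫ v in (0:ℝ)..1, v ^ b * (1 - v) ^ a := by
      rw [← intervalIntegral.integral_const_mul]
      apply intervalIntegral.integral_congr
      intro v hv
      rw [Set.uIcc_of_le (by norm_num : (0:ℝ) ≤ 1)] at hv
      have hv0 : 0 ≤ v := hv.1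
      have hv1 : 0 ≤ 1 - v := by linarith [hv.2]
      show (c * v) ^ b * (c - c * v) ^ a = c ^ (a + b) * (v ^ b * (1 - v) ^ a)
      have e1 : (c*v) ^ b = c ^ b * v ^ b := Real.mul_rpow (le_of_lt hcp) hv0
      have e2 : (c - c*v) ^ a = c ^ a * (1 - v) ^ a := by
        rw [show c - c*v = c * (1 - v) by ring, Real.mul_rpow (le_of_lt hcp) hv1]
      rw [e1, e2, Real.rpow_add hcp]
      ring
    rw [hsub, hsub2, real_beta ha hb]
    have hw : w (a + b + 1) 1 c = c ^ (a + b + 1) * Real.exp (-c)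
        / Real.Gamma (a + b + 1 + 1) := by
      simp only [w, if_pos hcp, Real.one_rpow, one_mul]
      ring
    rw [hw, show c * (c ^ (a+b) * (Real.Gamma (b+1) * Real.Gamma (a+1) / Real.Gamma (a+b+2)))
        = c ^ (a+b) * c * (Real.Gamma (b+1) * Real.Gamma (a+1) / Real.Gamma (a+b+2)) by ring]
    rw [show c ^ (a+b) * c = c ^ (a+b+1) by
      rw [Real.rpow_add_one (ne_of_gt hcp)]]
    rw [show a + b + 1 + 1 = a + b + 2 by ring]
    field_simp
  · have hz : ∀ z : ℝ, w a 1 (c - z) * w b 1 z = 0 := by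
      intro z
      by_cases hzp : 0 < z
      · rw [w_of_nonpos (by linarith : c - z ≤ 0), zero_mul]
      · rw [w_of_nonpos (le_of_not_gt hzp), mul_zero]
    simp only [hz, integral_zero]
    rw [w_of_nonpos (le_of_not_gt hcp)]

lemma taylor_expand (r : Polynomial ℝ) (v x : ℝ) :
    r.eval (v + x) = ∑ i ∈ Finset.range (r.natDegree + 1),
      (Polynomial.hasseDeriv i r).eval x * v ^ i := by
  rw [← Polynomial.taylor_eval x r v,
    Polynomial.eval_eq_sum_range' (n := r.natDegree + 1)
      (by rw [Polynomial.natDegree_taylor]; exact Nat.lt_succ_self _)]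
  simp [Polynomial.taylor_coeff]

lemma integrable_poly_mul_w_shift (r : Polynomial ℝ) {a : ℝ} (ha : 0 ≤ a) (c : ℝ) :
    Integrable (fun z => r.eval z * w a 1 (z - c)) := by
  have h := (integrable_poly_mul_w (Polynomial.taylor c r) ha).comp_sub_right c
  refine h.congr (Filter.Eventually.of_forall fun z => ?_)
  simp [Polynomial.taylor_eval, sub_add_cancel]

lemma integrable_kernel_prod (r : Polynomial ℝ) {a : ℝ} (ha : 0 ≤ a) (g : ℝ → ℝ)
    (hg : ∀ s : Polynomial ℝ, Integrable (fun x => s.eval x * g x)) :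
    Integrable (fun yx : ℝ × ℝ => r.eval yx.1 * w a 1 (yx.1 - yx.2) * g yx.2)
      ((volume : Measure ℝ).prod volume) := by
  have hG : Integrable (fun vx : ℝ × ℝ =>
      r.eval (vx.1 + vx.2) * w a 1 vx.1 * g vx.2) ((volume : Measure ℝ).prod volume) := by
    have hEq : (fun vx : ℝ × ℝ => r.eval (vx.1 + vx.2) * w a 1 vx.1 * g vx.2)
        = fun vx => ∑ i ∈ Finset.range (r.natDegree + 1),
            (vx.1 ^ i * w a 1 vx.1) * ((Polynomial.hasseDeriv i r).eval vx.2 * g vx.2) := by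
      funext vx
      rw [taylor_expand, Finset.sum_mul, Finset.sum_mul]
      exact Finset.sum_congr rfl fun i _ => by ring
    rw [hEq]
    exact integrable_finset_sum _ fun i _ =>
      (integrable_pow_mul_w i ha).mul_prod (hg _)
  have hT := measurePreserving_sub_prod (volume : Measure ℝ) volume
  have h2 := (memLp_one_iff_integrable.mpr hG).comp_measurePreserving hT
  rw [memLp_one_iff_integrable] at h2
  refine h2.congr (Filter.Eventually.of_forall fun yx => ?_)
  simp [Function.comp, sub_add_cancel]

lemma pairing_swap (r : Polynomial ℝ) {a : ℝ} (ha : 0 ≤ a) (g : ℝ → ℝ)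
    (hg : ∀ s : Polynomial ℝ, Integrable (fun x => s.eval x * g x)) :
    (∫ y : ℝ, ∫ x : ℝ, r.eval y * w a 1 (y - x) * g x)
      = ∫ x : ℝ, ∫ y : ℝ, r.eval y * w a 1 (y - x) * g x :=
  integral_integral_swap (integrable_kernel_prod r ha g hg)

lemma smooth_poly (r : Polynomial ℝ) {a : ℝ} (ha : 0 ≤ a) :
    ∃ R : Polynomial ℝ, ∀ z : ℝ, (∫ y : ℝ, r.eval y * w a 1 (y - z)) = R.eval z := by
  refine ⟨∑ i ∈ Finset.range (r.natDegree + 1),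
      Polynomial.C (∫ v : ℝ, v ^ i * w a 1 v) * Polynomial.hasseDeriv i r, fun z => ?_⟩
  have h1 : (∫ y : ℝ, r.eval y * w a 1 (y - z)) = ∫ v : ℝ, r.eval (v + z) * w a 1 v := by
    rw [← integral_add_right_eq_self (μ := volume)
      (fun y => r.eval y * w a 1 (y - z)) z]
    congr 1; funext v
    rw [add_sub_cancel_right]
  rw [h1]
  have h2 : (fun v : ℝ => r.eval (v + z) * w a 1 v) = fun v =>
      ∑ i ∈ Finset.range (r.natDegree + 1),
        (Polynomial.hasseDeriv i r).eval z * (v ^ i * w a 1 v) := by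
    funext v; rw [taylor_expand, Finset.sum_mul]
    exact Finset.sum_congr rfl fun i _ => by ring
  rw [h2, integral_finset_sum _ fun i _ => ((integrable_pow_mul_w i ha).const_mul _)]
  rw [Polynomial.eval_finset_sum]
  simp only [integral_const_mul, Polynomial.eval_mul, Polynomial.eval_C]
  exact Finset.sum_congr rfl fun i _ => by ring


/-- Propagation of bi-orthogonality: if `{p_k}` and `{q_ℓ}` are monic families,
`deg p_k = k`, `deg q_ℓ = ℓ`, bi-orthogonal with respect to the pairing
`(p,q) ↦ ∫∫ p(y) κ_{t-s}(y-x) q(x) w_{N(s-1),1}(x) dx dy` with positive norms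
`h_ℓ`, then the transformed functions
`P_k(z) = ∫ p_k(y) κ_{t-u}(y-z) dy` (for `u < t`; `P_k = p_k` for `u = t`) and
`Q_ℓ(z) = ∫ κ_{u-s}(z-x) q_ℓ(x) w_{N(s-1),1}(x) dx` (for `u > s`;
`Q_ℓ = q_ℓ · w_{N(s-1),1}` for `u = s`) satisfy `∫ P_k(z) Q_ℓ(z) dz = h_ℓ δ_{kℓ}`. -/
theorem biorthogonality_propagation (N : ℕ) (hN : 0 < N) (t s u : ℕ)
    (hs : 0 < s) (hst : s < t) (hsu : s ≤ u) (hut : u ≤ t)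
    (p q : ℕ → Polynomial ℝ) (h : ℕ → ℝ)
    (hpmonic : ∀ k, (p k).Monic) (hpdeg : ∀ k, (p k).natDegree = k)
    (hqmonic : ∀ l, (q l).Monic) (hqdeg : ∀ l, (q l).natDegree = l)
    (hpos : ∀ l, 0 < h l)
    (hbi : ∀ k l, (∫ y : ℝ, ∫ x : ℝ,
        (p k).eval y * kappa N ((t : ℝ) - s) (y - x) * (q l).eval x
          * w ((N : ℝ) * ((s : ℝ) - 1)) 1 x)
      = if k = l then h l else 0)
    (k l : ℕ) :
    (∫ z : ℝ,
        (if u = t then (p k).eval z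
         else ∫ y : ℝ, (p k).eval y * kappa N ((t : ℝ) - u) (y - z))
        * (if u = s then (q l).eval z * w ((N : ℝ) * ((s : ℝ) - 1)) 1 z
           else ∫ x : ℝ, kappa N ((u : ℝ) - s) (z - x) * (q l).eval x
              * w ((N : ℝ) * ((s : ℝ) - 1)) 1 x))
      = if k = l then h l else 0 := by
  have hN1 : (1:ℝ) ≤ N := by exact_mod_cast hN
  have hs1 : (1:ℝ) ≤ s := by exact_mod_cast hs
  have ha0 : (0:ℝ) ≤ (N : ℝ) * ((s : ℝ) - 1) := by nlinarith
  set g : ℝ → ℝ := fun x => (q l).eval x * w ((N : ℝ) * ((s : ℝ) - 1)) 1 x with hgdef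
  have hg : ∀ r : Polynomial ℝ, Integrable (fun x => r.eval x * g x) := by
    intro r
    refine (integrable_poly_mul_w (r * q l) ha0).congr
      (Filter.Eventually.of_forall fun x => ?_)
    simp [hgdef, Polynomial.eval_mul, mul_assoc]
  have hts : (0:ℝ) ≤ (N : ℝ) * ((t:ℝ) - (s:ℝ)) - 1 := by
    have h1 : (s:ℝ) + 1 ≤ t := by exact_mod_cast hst
    nlinarith
  have hbi' : (∫ y : ℝ, ∫ x : ℝ,
      (p k).eval y * w ((N:ℝ)*((t:ℝ)-(s:ℝ)) - 1) 1 (y - x) * g x)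
      = if k = l then h l else 0 := by
    rw [← hbi k l]
    congr 1; funext y; congr 1; funext x
    simp only [kappa, hgdef]; try ring
  by_cases hut' : u = t
  · have hus : ¬ u = s := by omega
    simp only [if_pos hut', if_neg hus]
    subst hut'
    rw [← hbi']
    congr 1; funext z
    rw [← integral_const_mul]
    congr 1; funext x
    simp only [kappa, hgdef]; try ring
  · by_cases hus : u = s
    · simp only [if_neg hut', if_pos hus]
      subst hus
      rw [← hbi']
      rw [pairing_swap (p k) hts g hg]
      congr 1; funext z
      rw [← integral_mul_const]
      all_goals congr 1
      all_goals funext y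
      all_goals simp only [kappa, hgdef]
      all_goals ring
    · -- s < u < t
      simp only [if_neg hut', if_neg hus]
      have hu1 : (s:ℝ) + 1 ≤ u := by exact_mod_cast lt_of_le_of_ne hsu (Ne.symm hus)
      have hu2 : (u:ℝ) + 1 ≤ t := by exact_mod_cast lt_of_le_of_ne hut hut'
      have hA : (0:ℝ) ≤ (N:ℝ)*((t:ℝ)-(u:ℝ)) - 1 := by nlinarith
      have hB : (0:ℝ) ≤ (N:ℝ)*((u:ℝ)-(s:ℝ)) - 1 := by nlinarith
      obtain ⟨R, hR⟩ := smooth_poly (p k) hA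
      have hginner : ∀ x : ℝ, ∀ r : Polynomial ℝ,
          Integrable (fun z => r.eval z * w ((N:ℝ)*((u:ℝ)-(s:ℝ)) - 1) 1 (z - x)) :=
        fun x r => integrable_poly_mul_w_shift r hB x
      calc (∫ z : ℝ,
          (∫ y : ℝ, (p k).eval y * kappa N ((t : ℝ) - u) (y - z))
          * (∫ x : ℝ, kappa N ((u : ℝ) - s) (z - x) * (q l).eval x
              * w ((N : ℝ) * ((s : ℝ) - 1)) 1 x))
          = ∫ z : ℝ, ∫ x : ℝ,
              R.eval z * w ((N:ℝ)*((u:ℝ)-(s:ℝ)) - 1) 1 (z - x) * g x := by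
            congr 1; funext z
            rw [show (∫ y : ℝ, (p k).eval y * kappa N ((t : ℝ) - u) (y - z)) = R.eval z
              from hR z]
            rw [← integral_const_mul]
            congr 1; funext x
            simp only [kappa, hgdef]; try ring
        _ = ∫ x : ℝ, ∫ z : ℝ,
              R.eval z * w ((N:ℝ)*((u:ℝ)-(s:ℝ)) - 1) 1 (z - x) * g x :=
            pairing_swap R hB g hg
        _ = ∫ x : ℝ, (∫ z : ℝ,
              R.eval z * w ((N:ℝ)*((u:ℝ)-(s:ℝ)) - 1) 1 (z - x)) * g x := by
            congr 1; funext x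
            rw [integral_mul_const]
        _ = ∫ x : ℝ, (∫ y : ℝ,
              (p k).eval y * w ((N:ℝ)*((t:ℝ)-(s:ℝ)) - 1) 1 (y - x)) * g x := by
            congr 1; funext x
            congr 1
            calc (∫ z : ℝ, R.eval z * w ((N:ℝ)*((u:ℝ)-(s:ℝ)) - 1) 1 (z - x))
                = ∫ z : ℝ, (∫ y : ℝ, (p k).eval y * kappa N ((t : ℝ) - u) (y - z))
                    * w ((N:ℝ)*((u:ℝ)-(s:ℝ)) - 1) 1 (z - x) := by
                  congr 1; funext z
                  simp only [kappa]
                  rw [← hR z]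
              _ = ∫ z : ℝ, ∫ y : ℝ, (p k).eval y
                    * w ((N:ℝ)*((t:ℝ)-(u:ℝ)) - 1) 1 (y - z)
                    * w ((N:ℝ)*((u:ℝ)-(s:ℝ)) - 1) 1 (z - x) := by
                  congr 1; funext z
                  rw [← integral_mul_const]
                  all_goals congr 1
                  all_goals funext y
                  all_goals simp only [kappa]
              _ = ∫ y : ℝ, ∫ z : ℝ, (p k).eval y
                    * w ((N:ℝ)*((t:ℝ)-(u:ℝ)) - 1) 1 (y - z)
                    * w ((N:ℝ)*((u:ℝ)-(s:ℝ)) - 1) 1 (z - x) :=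
                  (integral_integral_swap (integrable_kernel_prod (p k) hA
                    (fun z => w ((N:ℝ)*((u:ℝ)-(s:ℝ)) - 1) 1 (z - x))
                    (hginner x))).symm
              _ = ∫ y : ℝ, (p k).eval y * ∫ z : ℝ,
                    w ((N:ℝ)*((t:ℝ)-(u:ℝ)) - 1) 1 (y - z)
                    * w ((N:ℝ)*((u:ℝ)-(s:ℝ)) - 1) 1 (z - x) := by
                  congr 1; funext y
                  rw [← integral_const_mul]
                  congr 1; funext z
                  ring
              _ = ∫ y : ℝ, (p k).eval y * w ((N:ℝ)*((t:ℝ)-(s:ℝ)) - 1) 1 (y - x) := by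
                  congr 1; funext y
                  rw [w_conv hA hB y x,
                    show (N:ℝ)*((t:ℝ)-(u:ℝ)) - 1 + ((N:ℝ)*((u:ℝ)-(s:ℝ)) - 1) + 1
                      = (N:ℝ)*((t:ℝ)-(s:ℝ)) - 1 by ring]
        _ = ∫ x : ℝ, ∫ y : ℝ,
              (p k).eval y * w ((N:ℝ)*((t:ℝ)-(s:ℝ)) - 1) 1 (y - x) * g x := by
            congr 1; funext x
            rw [integral_mul_const]
        _ = ∫ y : ℝ, ∫ x : ℝ,
              (p k).eval y * w ((N:ℝ)*((t:ℝ)-(s:ℝ)) - 1) 1 (y - x) * g x :=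
            (pairing_swap (p k) hts g hg).symm
        _ = if k = l then h l else 0 := hbi'
end

section
/- Let t > s > 0 be positive integers and N a positive integer. For every integer n ≥ 0, the moment determinant D_n^{(t,s)} := det_{0≤k,ℓ≤n}( M_{k,ℓ}^{(t,s)} ), where M_{k,ℓ}^{(t,s)} = ∫∫_{ℝ²} y^k κ_{t−s}(y−x) x^ℓ w_{N(s−1),1}(x) dx dy, equals ∏_{k=0}^{n} Γ(N(s−1)+k+1)Γ(k+1)/Γ(N(s−1)+1), and in particular D_n^{(t,s)} > 0. -/
open MeasureTheory

open Real Set Polynomial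

section Aux

lemma w_eq_indicator (a : ℝ) (m : ℕ) :
    (fun x : ℝ => x ^ m * w a 1 x)
      = (Ioi (0:ℝ)).indicator
          (fun x => (Real.Gamma (a+1))⁻¹ * (Real.exp (-x) * x ^ (a + m + 1 - 1))) := by
  funext x
  unfold w
  by_cases hx : 0 < x
  · rw [if_pos hx, Set.indicator_of_mem (Set.mem_Ioi.mpr hx)]
    rw [Real.one_rpow, one_mul]
    rw [show a + (m : ℝ) + 1 - 1 = (m : ℝ) + a by ring, Real.rpow_add hx,
      Real.rpow_natCast]
    ring
  · rw [if_neg hx, Set.indicator_of_notMem (by simpa using hx), mul_zero]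

lemma integrable_moment (a : ℝ) (ha : 0 < a + 1) (m : ℕ) :
    Integrable (fun x : ℝ => x ^ m * w a 1 x) := by
  rw [w_eq_indicator]
  rw [integrable_indicator_iff measurableSet_Ioi]
  have h : (0:ℝ) < a + m + 1 := by
    have : (0:ℝ) ≤ (m:ℝ) := Nat.cast_nonneg m
    linarith
  exact (Real.GammaIntegral_convergent h).const_mul _

lemma integral_moment (a : ℝ) (ha : 0 < a + 1) (m : ℕ) :
    ∫ x : ℝ, x ^ m * w a 1 x = Real.Gamma (a + m + 1) / Real.Gamma (a + 1) := by
  have h : (0:ℝ) < a + m + 1 := by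
    have : (0:ℝ) ≤ (m:ℝ) := Nat.cast_nonneg m
    linarith
  rw [w_eq_indicator, integral_indicator measurableSet_Ioi, integral_const_mul _,
    ← Real.Gamma_eq_integral h, inv_mul_eq_div]

lemma Gamma_ascPochhammer (x : ℝ) (hx : 0 < x) (l : ℕ) :
    Real.Gamma (x + l) = Real.Gamma x * (ascPochhammer ℝ l).eval x := by
  induction l with
  | zero => simp
  | succ l ih =>
    have h1 : x + ((l+1 : ℕ) : ℝ) = (x + l) + 1 := by push_cast; ring
    have h2 : x + (l:ℝ) ≠ 0 := by positivity
    rw [h1, Real.Gamma_add_one h2, ih, ascPochhammer_succ_eval]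
    ring

lemma integral_shift (a' : ℝ) (ha' : 0 < a' + 1) (k : ℕ) (x : ℝ) :
    ∫ y : ℝ, y ^ k * w a' 1 (y - x)
      = ∑ j ∈ Finset.range (k+1),
          ((k.choose j : ℝ) * (Real.Gamma (a' + ((k-j : ℕ) : ℝ) + 1) / Real.Gamma (a' + 1)))
            * x ^ j := by
  have h1 : (fun y : ℝ => y ^ k * w a' 1 (y - x))
      = fun y => (fun z => (z + x) ^ k * w a' 1 z) (y - x) := by
    funext y; simp [sub_add_cancel]
  rw [h1, integral_sub_right_eq_self (fun z => (z + x) ^ k * w a' 1 z) x]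
  have h2 : (fun z : ℝ => (z + x) ^ k * w a' 1 z)
      = fun z => ∑ j ∈ Finset.range (k+1),
          ((k.choose j : ℝ) * x ^ j) * (z ^ (k - j) * w a' 1 z) := by
    funext z
    rw [show z + x = x + z from add_comm z x, add_pow, Finset.sum_mul]
    refine Finset.sum_congr rfl fun j _ => by ring
  rw [h2, integral_finset_sum _ (fun j _ => ((integrable_moment a' ha' (k-j)).const_mul _))]
  refine Finset.sum_congr rfl fun j _ => ?_
  rw [integral_const_mul, integral_moment a' ha' (k-j)]
  ring

lemma entry_eq (a a' : ℝ) (ha : 0 < a + 1) (ha' : 0 < a' + 1) (k l : ℕ) :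
    ∫ y : ℝ, ∫ x : ℝ, y ^ k * w a' 1 (y - x) * x ^ l * w a 1 x
      = ∑ j ∈ Finset.range (k+1),
          ((k.choose j : ℝ) * (Real.Gamma (a' + ((k-j:ℕ):ℝ) + 1) / Real.Gamma (a' + 1)))
            * (Real.Gamma (a + ((j + l : ℕ):ℝ) + 1) / Real.Gamma (a + 1)) := by
  set G : ℝ × ℝ → ℝ := fun q => (q.1 + q.2) ^ k * w a' 1 q.1 * q.2 ^ l * w a 1 q.2 with hG
  have hGsum : G = fun q => ∑ j ∈ Finset.range (k+1),
      (k.choose j : ℝ) * ((q.1 ^ (k - j) * w a' 1 q.1) * (q.2 ^ (j + l) * w a 1 q.2)) := by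
    funext q
    rw [hG]
    simp only
    rw [show q.1 + q.2 = q.2 + q.1 from add_comm _ _, add_pow, Finset.sum_mul, Finset.sum_mul,
      Finset.sum_mul]
    refine Finset.sum_congr rfl fun j _ => ?_
    rw [pow_add]
    ring
  have hGint : Integrable G (volume.prod volume) := by
    rw [hGsum]
    apply integrable_finset_sum
    intro j _
    exact ((integrable_moment a' ha' (k-j)).mul_prod (integrable_moment a ha (j+l))).const_mul _
  have hT : MeasurePreserving (fun p : ℝ × ℝ => (p.1 - p.2, p.2))
      ((volume : Measure ℝ).prod volume) ((volume : Measure ℝ).prod volume) :=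
    measurePreserving_sub_prod volume volume
  have hF : Integrable
      (Function.uncurry fun y x : ℝ => y ^ k * w a' 1 (y - x) * x ^ l * w a 1 x)
      ((volume : Measure ℝ).prod volume) := by
    have heq : (Function.uncurry fun y x : ℝ => y ^ k * w a' 1 (y - x) * x ^ l * w a 1 x)
        = G ∘ (fun p : ℝ × ℝ => (p.1 - p.2, p.2)) := by
      funext p
      simp only [Function.uncurry, Function.comp, hG, sub_add_cancel]
    rw [heq]
    exact (hT.integrable_comp hGint.aestronglyMeasurable).mpr hGint
  rw [integral_integral_swap hF]
  have hinner : ∀ x : ℝ, ∫ y : ℝ, y ^ k * w a' 1 (y - x) * x ^ l * w a 1 x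
      = ((∫ y : ℝ, y ^ k * w a' 1 (y - x)) * x ^ l) * w a 1 x := by
    intro x
    rw [integral_mul_const, integral_mul_const]
  simp_rw [hinner, integral_shift a' ha' k]
  have houter : (fun x : ℝ => ((∑ j ∈ Finset.range (k+1),
        ((k.choose j : ℝ) * (Real.Gamma (a' + ((k-j:ℕ):ℝ) + 1) / Real.Gamma (a' + 1))) * x ^ j)
          * x ^ l) * w a 1 x)
      = fun x : ℝ => ∑ j ∈ Finset.range (k+1),
          ((k.choose j : ℝ) * (Real.Gamma (a' + ((k-j:ℕ):ℝ) + 1) / Real.Gamma (a' + 1)))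
            * (x ^ (j + l) * w a 1 x) := by
    funext x
    rw [Finset.sum_mul, Finset.sum_mul]
    refine Finset.sum_congr rfl fun j _ => ?_
    rw [pow_add]
    ring
  rw [houter, integral_finset_sum _
    (fun j _ => (integrable_moment a ha (j+l)).const_mul _)]
  refine Finset.sum_congr rfl fun j _ => ?_
  rw [integral_const_mul, integral_moment a ha (j+l)]

lemma det_H (a : ℝ) (ha : 0 < a + 1) (n : ℕ) :
    (Matrix.of fun j l : Fin (n+1) =>
        Real.Gamma (a + (((j:ℕ) + (l:ℕ) : ℕ) : ℝ) + 1) / Real.Gamma (a + 1)).det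
      = (∏ j : Fin (n+1), Real.Gamma (a + (j:ℕ) + 1) / Real.Gamma (a + 1))
          * (Nat.superFactorial n : ℝ) := by
  have hD : (Matrix.of fun j l : Fin (n+1) =>
        Real.Gamma (a + (((j:ℕ) + (l:ℕ) : ℕ) : ℝ) + 1) / Real.Gamma (a + 1))
      = Matrix.diagonal (fun j : Fin (n+1) => Real.Gamma (a + (j:ℕ) + 1) / Real.Gamma (a + 1))
        * Matrix.of (fun i j : Fin (n+1) =>
            (ascPochhammer ℝ (j:ℕ)).eval (a + (i:ℕ) + 1)) := by
    ext i j
    rw [Matrix.diagonal_mul, Matrix.of_apply, Matrix.of_apply,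
      show a + (((i:ℕ) + (j:ℕ) : ℕ) : ℝ) + 1 = (a + (i:ℕ) + 1) + ((j:ℕ) : ℝ) by push_cast; ring,
      Gamma_ascPochhammer _ (by have : (0:ℝ) ≤ (i:ℕ) := Nat.cast_nonneg _; linarith) (j:ℕ)]
    ring
  rw [hD, Matrix.det_mul, Matrix.det_diagonal]
  congr 1
  rw [← Matrix.det_eval_matrixOfPolynomials_eq_det_vandermonde
    (fun i : Fin (n+1) => a + (i:ℕ) + 1) (fun j : Fin (n+1) => ascPochhammer ℝ (j:ℕ))
    (fun j => ascPochhammer_natDegree ℝ (j:ℕ))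
    (fun j => monic_ascPochhammer ℝ (j:ℕ))]
  rw [show (fun i : Fin (n+1) => a + (i:ℕ) + 1) = fun i : Fin (n+1) => ((i:ℕ):ℝ) + (a+1) by
    funext i; ring]
  rw [Matrix.det_vandermonde_add, Matrix.det_vandermonde_id_eq_superFactorial]

lemma det_A (a' : ℝ) (ha' : 0 < a' + 1) (n : ℕ) :
    (Matrix.of fun k j : Fin (n+1) =>
        ((k:ℕ).choose (j:ℕ) : ℝ)
          * (Real.Gamma (a' + (((k:ℕ) - (j:ℕ) : ℕ) : ℝ) + 1) / Real.Gamma (a' + 1))).det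
      = 1 := by
  rw [Matrix.det_of_lowerTriangular _ (fun i j hij => by
    rw [Matrix.of_apply, Nat.choose_eq_zero_of_lt (by exact_mod_cast hij), Nat.cast_zero,
      zero_mul])]
  rw [Finset.prod_eq_one]
  intro k _
  rw [Matrix.of_apply, Nat.choose_self, Nat.sub_self, Nat.cast_zero, Nat.cast_one, one_mul,
    add_zero, div_self (Real.Gamma_pos_of_pos ha').ne']

lemma det_M (a a' : ℝ) (ha : 0 < a + 1) (ha' : 0 < a' + 1) (n : ℕ) :
    (Matrix.of fun k l : Fin (n + 1) =>
        ∫ y : ℝ, ∫ x : ℝ, y ^ (k : ℕ) * w a' 1 (y - x) * x ^ (l : ℕ) * w a 1 x).det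
      = ∏ k ∈ Finset.range (n + 1),
          Real.Gamma (a + k + 1) * Real.Gamma ((k : ℝ) + 1) / Real.Gamma (a + 1) := by
  have hM : (Matrix.of fun k l : Fin (n + 1) =>
        ∫ y : ℝ, ∫ x : ℝ, y ^ (k : ℕ) * w a' 1 (y - x) * x ^ (l : ℕ) * w a 1 x)
      = (Matrix.of fun k j : Fin (n+1) =>
          ((k:ℕ).choose (j:ℕ) : ℝ)
            * (Real.Gamma (a' + (((k:ℕ) - (j:ℕ) : ℕ) : ℝ) + 1) / Real.Gamma (a' + 1)))
        * (Matrix.of fun j l : Fin (n+1) =>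
            Real.Gamma (a + (((j:ℕ) + (l:ℕ) : ℕ) : ℝ) + 1) / Real.Gamma (a + 1)) := by
    ext k l
    rw [Matrix.of_apply, entry_eq a a' ha ha' (k:ℕ) (l:ℕ), Matrix.mul_apply]
    simp only [Matrix.of_apply]
    rw [Fin.sum_univ_eq_sum_range (fun j : ℕ =>
      ((k:ℕ).choose j : ℝ)
        * (Real.Gamma (a' + (((k:ℕ) - j : ℕ) : ℝ) + 1) / Real.Gamma (a' + 1))
        * (Real.Gamma (a + ((j + (l:ℕ) : ℕ) : ℝ) + 1) / Real.Gamma (a + 1))) (n+1)]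
    exact Finset.sum_subset
      (Finset.range_subset_range.mpr (Nat.succ_le_succ (Nat.lt_succ_iff.mp k.2)))
      (fun j _ hj => by
        have hkj : (k:ℕ) < j := by
          by_contra h
          exact hj (Finset.mem_range.mpr (Nat.lt_succ_of_le (Nat.le_of_not_lt h)))
        rw [Nat.choose_eq_zero_of_lt hkj, Nat.cast_zero, zero_mul, zero_mul])
  rw [hM, Matrix.det_mul, det_A a' ha', one_mul, det_H a ha]
  rw [Fin.prod_univ_eq_prod_range
    (fun j : ℕ => Real.Gamma (a + j + 1) / Real.Gamma (a + 1)) (n+1)]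
  rw [show ((Nat.superFactorial n : ℕ) : ℝ) = ∏ k ∈ Finset.range (n+1), (k.factorial : ℝ) by
    rw [← Nat.cast_prod]
    exact_mod_cast congrArg (Nat.cast (R := ℝ)) (Nat.prod_range_succ_factorial n).symm]
  rw [← Finset.prod_mul_distrib]
  refine Finset.prod_congr rfl fun k _ => ?_
  rw [← Real.Gamma_nat_eq_factorial k]
  ring

end Aux

/-- The moment determinant `D_n^{(t,s)} = det_{0≤k,ℓ≤n}(M_{k,ℓ}^{(t,s)})` equals
`∏_{k=0}^n Γ(N(s-1)+k+1)Γ(k+1)/Γ(N(s-1)+1)`; in particular it is positive. -/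
theorem lup_moment_det (N : ℕ) (hN : 0 < N) (t s : ℕ) (hs : 0 < s) (hst : s < t) (n : ℕ) :
    (Matrix.of fun k l : Fin (n + 1) =>
        ∫ y : ℝ, ∫ x : ℝ,
          y ^ (k : ℕ) * kappa N ((t : ℝ) - s) (y - x) * x ^ (l : ℕ)
            * w ((N : ℝ) * ((s : ℝ) - 1)) 1 x).det
      = ∏ k ∈ Finset.range (n + 1),
          Real.Gamma ((N : ℝ) * ((s : ℝ) - 1) + k + 1) * Real.Gamma ((k : ℝ) + 1)
            / Real.Gamma ((N : ℝ) * ((s : ℝ) - 1) + 1) ∧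
    0 < (Matrix.of fun k l : Fin (n + 1) =>
        ∫ y : ℝ, ∫ x : ℝ,
          y ^ (k : ℕ) * kappa N ((t : ℝ) - s) (y - x) * x ^ (l : ℕ)
            * w ((N : ℝ) * ((s : ℝ) - 1)) 1 x).det := by
  have ha : 0 < (N:ℝ) * ((s:ℝ) - 1) + 1 := by
    have h1 : (1:ℝ) ≤ (s:ℝ) := by exact_mod_cast hs
    have h2 : (0:ℝ) ≤ (N:ℝ) := Nat.cast_nonneg N
    nlinarith
  have ha' : 0 < ((N:ℝ) * ((t:ℝ) - (s:ℝ)) - 1) + 1 := by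
    have h2 : (1:ℝ) ≤ (N:ℝ) := by exact_mod_cast hN
    have h3 : (1:ℝ) ≤ (t:ℝ) - (s:ℝ) := by
      have h4 : (s:ℕ) + 1 ≤ t := hst
      have h5 : ((s:ℕ):ℝ) + 1 ≤ ((t:ℕ):ℝ) := by exact_mod_cast h4
      linarith
    nlinarith
  have key := det_M ((N:ℝ) * ((s:ℝ) - 1)) ((N:ℝ) * ((t:ℝ) - (s:ℝ)) - 1) ha ha' n
  have hpos : 0 < ∏ k ∈ Finset.range (n + 1),
      Real.Gamma ((N : ℝ) * ((s : ℝ) - 1) + k + 1) * Real.Gamma ((k : ℝ) + 1)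
        / Real.Gamma ((N : ℝ) * ((s : ℝ) - 1) + 1) := by
    refine Finset.prod_pos fun k _ => ?_
    have hk : (0:ℝ) ≤ (k:ℝ) := Nat.cast_nonneg k
    have h1 : 0 < Real.Gamma ((N:ℝ) * ((s:ℝ) - 1) + k + 1) :=
      Real.Gamma_pos_of_pos (by linarith)
    have h2 : 0 < Real.Gamma ((k:ℝ) + 1) := Real.Gamma_pos_of_pos (by linarith)
    have h3 : 0 < Real.Gamma ((N:ℝ) * ((s:ℝ) - 1) + 1) := Real.Gamma_pos_of_pos ha
    exact div_pos (mul_pos h1 h2) h3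
  exact ⟨key, lt_of_lt_of_eq hpos key.symm⟩
end

section
/- For every real c > -1 and every integer n ≥ 0, the (n+1)×(n+1) determinant det_{0≤k,ℓ≤n}( Γ(c+k+ℓ+1) ) equals ∏_{j=0}^{n} Γ(c+j+1) Γ(j+1). -/
open Finset Polynomial

lemma gamma_poch (x : ℝ) (hx : 0 < x) (k : ℕ) :
    Real.Gamma (x + k) = Real.Gamma x * (ascPochhammer ℝ k).eval x := by
  induction k with
  | zero => simp
  | succ k ih =>
    have h1 : (0:ℝ) < x + k := by positivity
    have hx' : x + ((k : ℝ) + 1) = (x + k) + 1 := by ring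
    rw [Nat.cast_add, Nat.cast_one, hx', Real.Gamma_add_one h1.ne', ih,
      ascPochhammer_succ_right]
    simp [Polynomial.eval_mul]
    ring

/-- For `c > -1` and `n ≥ 0`, `det_{0≤k,ℓ≤n}(Γ(c+k+ℓ+1)) = ∏_{j=0}^n Γ(c+j+1)Γ(j+1)`. -/
theorem gamma_hankel_det (c : ℝ) (hc : -1 < c) (n : ℕ) :
    (Matrix.of fun k l : Fin (n + 1) => Real.Gamma (c + k + l + 1)).det
      = ∏ j ∈ Finset.range (n + 1), Real.Gamma (c + j + 1) * Real.Gamma ((j : ℝ) + 1) := by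
  have hpos : ∀ l : Fin (n + 1), (0:ℝ) < c + l + 1 := fun l => by
    have : (0:ℝ) ≤ (l : ℝ) := Nat.cast_nonneg _
    linarith
  have hentry : ∀ k l : Fin (n + 1), Real.Gamma (c + k + l + 1)
      = Real.Gamma (c + l + 1) * (ascPochhammer ℝ k).eval (c + l + 1) := by
    intro k l
    have : c + (k : ℝ) + l + 1 = (c + l + 1) + (k : ℕ) := by ring
    rw [this, gamma_poch _ (hpos l) k]
  have h1 : (Matrix.of fun k l : Fin (n + 1) => Real.Gamma (c + k + l + 1))
      = Matrix.of fun k l : Fin (n + 1) =>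
        Real.Gamma (c + l + 1) * (ascPochhammer ℝ k).eval (c + l + 1) := by
    ext k l; exact hentry k l
  rw [h1, Matrix.det_mul_row (v := fun l : Fin (n + 1) => Real.Gamma (c + l + 1))
    (A := fun k l : Fin (n + 1) => (ascPochhammer ℝ (k : ℕ)).eval (c + l + 1))]
  have h2 : (Matrix.det fun k l : Fin (n + 1) =>
        (ascPochhammer ℝ (k : ℕ)).eval (c + l + 1))
      = (Matrix.of fun l k : Fin (n + 1) =>
        (ascPochhammer ℝ (k : ℕ)).eval (c + l + 1)).det := by
    rw [← Matrix.det_transpose]; congr 1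
  rw [h2, ← Matrix.det_eval_matrixOfPolynomials_eq_det_vandermonde
      (fun l : Fin (n+1) => c + l + 1) (fun k => ascPochhammer ℝ (k : ℕ))
      (fun k => ascPochhammer_natDegree ℝ (k : ℕ)) (fun k => monic_ascPochhammer ℝ (k : ℕ))]
  have h3 : (Matrix.vandermonde fun l : Fin (n+1) => c + (l : ℝ) + 1).det
      = (Nat.superFactorial n : ℝ) := by
    have : (fun l : Fin (n+1) => c + (l : ℝ) + 1)
        = fun l : Fin (n+1) => (l : ℝ) + (c + 1) := by ext l; ring
    rw [this, Matrix.det_vandermonde_add, Matrix.det_vandermonde_id_eq_superFactorial]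
  rw [h3, ← Nat.prod_range_succ_factorial, Finset.prod_mul_distrib]
  rw [Fin.prod_univ_eq_prod_range (fun j => Real.Gamma (c + j + 1))]
  congr 1
  rw [Nat.cast_prod]
  exact Finset.prod_congr rfl fun j _ => (Real.Gamma_nat_eq_factorial j).symm
end

section
/- Let t > s > 0 be positive integers and N a positive integer. The constants h_ℓ^{(t,s)} := D_ℓ^{(t,s)}/D_{ℓ−1}^{(t,s)} (with D_{−1}^{(t,s)} := 1), where D_n^{(t,s)} = det_{0≤k,ℓ≤n}(∫∫_{ℝ²} y^k κ_{t−s}(y−x) x^ℓ w_{N(s−1),1}(x) dx dy), satisfy h_ℓ^{(t,s)} = ℓ! · Γ(N(s−1)+ℓ+1)/Γ(N(s−1)+1) for all ℓ ≥ 0; in particular h_ℓ^{(t,s)} does not depend on t. -/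
open MeasureTheory

/-- The moment determinant `D_n^{(t,s)} = det_{0≤k,ℓ≤n}(M_{k,ℓ}^{(t,s)})`, where
`M_{k,ℓ}^{(t,s)} = ∫∫ y^k κ_{t-s}(y-x) x^ℓ w_{N(s-1),1}(x) dx dy`. -/
noncomputable def momentDet (N t s n : ℕ) : ℝ :=
  (Matrix.of fun k l : Fin (n + 1) =>
      ∫ y : ℝ, ∫ x : ℝ,
        y ^ (k : ℕ) * kappa N ((t : ℝ) - s) (y - x) * x ^ (l : ℕ)
          * w ((N : ℝ) * ((s : ℝ) - 1)) 1 x).det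

lemma realBeta {p q : ℝ} (hp : 0 < p) (hq : 0 < q) {y : ℝ} (hy : 0 < y) :
    ∫ x in (0:ℝ)..y, x ^ (p - 1) * (y - x) ^ (q - 1)
      = Real.Gamma p * Real.Gamma q / Real.Gamma (p + q) * y ^ (p + q - 1) := by
  have hC := Complex.betaIntegral_scaled (p : ℂ) (q : ℂ) hy
  have hGa : Complex.Gamma ((p : ℂ) + q) ≠ 0 := by
    rw [← Complex.ofReal_add, Complex.Gamma_ofReal]
    exact_mod_cast (Real.Gamma_pos_of_pos (by linarith)).ne'
  have hB : Complex.betaIntegral (p : ℂ) (q : ℂ)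
      = ((Real.Gamma p * Real.Gamma q / Real.Gamma (p + q) : ℝ) : ℂ) := by
    have h := Complex.Gamma_mul_Gamma_eq_betaIntegral
      (s := (p:ℂ)) (t := (q:ℂ)) (by simpa using hp) (by simpa using hq)
    rw [Complex.ofReal_div, Complex.ofReal_mul, ← Complex.Gamma_ofReal, ← Complex.Gamma_ofReal,
      ← Complex.Gamma_ofReal, Complex.ofReal_add, eq_div_iff hGa, h]
    ring
  have hL : ∫ x in (0:ℝ)..y, (x : ℂ) ^ ((p:ℂ) - 1) * ((y : ℂ) - x) ^ ((q:ℂ) - 1)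
      = ((∫ x in (0:ℝ)..y, x ^ (p - 1) * (y - x) ^ (q - 1) : ℝ) : ℂ) := by
    rw [← intervalIntegral.integral_ofReal]
    refine intervalIntegral.integral_congr fun x hx => ?_
    rw [Set.uIcc_of_le hy.le] at hx
    rw [show ((p:ℂ) - 1) = ((p - 1 : ℝ) : ℂ) by push_cast; ring,
      show ((q:ℂ) - 1) = ((q - 1 : ℝ) : ℂ) by push_cast; ring,
      show ((y:ℂ) - (x:ℂ)) = ((y - x : ℝ) : ℂ) by push_cast; ring,
      ← Complex.ofReal_cpow hx.1, ← Complex.ofReal_cpow (by linarith [hx.2]),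
      ← Complex.ofReal_mul]
  have hR : ((y:ℂ)) ^ ((p:ℂ) + (q:ℂ) - 1) = ((y ^ (p + q - 1) : ℝ) : ℂ) := by
    rw [show ((p:ℂ) + (q:ℂ) - 1) = ((p + q - 1 : ℝ) : ℂ) by push_cast; ring,
      ← Complex.ofReal_cpow hy.le]
  rw [hL, hB, hR, ← Complex.ofReal_mul] at hC
  rw [Complex.ofReal_inj.mp hC]
  ring

lemma w_eq (a x : ℝ) :
    w a 1 x = Set.indicator (Set.Ioi 0)
      (fun x => x ^ a * Real.exp (-x) / Real.Gamma (a + 1)) x := by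
  rw [Set.indicator_apply, w]
  simp only [Set.mem_Ioi, Real.one_rpow, one_mul]
  split <;> [ring; rfl]

lemma moment {p : ℝ} (hp : 0 < p) (k : ℕ) :
    ∫ y : ℝ, y ^ k * w (p - 1) 1 y = Real.Gamma (p + k) / Real.Gamma p := by
  have h1 : ∀ y : ℝ, y ^ k * w (p - 1) 1 y
      = Set.indicator (Set.Ioi 0)
          (fun y => y ^ k * (y ^ (p - 1) * Real.exp (-y) / Real.Gamma (p - 1 + 1))) y := by
    intro y
    rw [w_eq, Set.indicator_apply, Set.indicator_apply]
    split <;> simp [mul_comm]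
  simp_rw [h1, integral_indicator measurableSet_Ioi]
  rw [show Real.Gamma (p + k) / Real.Gamma p
      = ∫ y in Set.Ioi (0:ℝ), Real.exp (-y) * y ^ (p + k - 1) / Real.Gamma p from ?_]
  · refine setIntegral_congr_fun measurableSet_Ioi fun y hy => ?_
    rw [Set.mem_Ioi] at hy
    rw [← Real.rpow_natCast y k, sub_add_cancel,
      show Real.exp (-y) * y ^ (p + k - 1) = y ^ (p + k - 1) * Real.exp (-y) by ring,
      show (p + (k:ℝ) - 1) = (k:ℝ) + (p - 1) by ring, Real.rpow_add hy]
    ring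
  · rw [integral_div, ← Real.Gamma_eq_integral (by positivity)]

lemma conv {p q : ℝ} (hp : 0 < p) (hq : 0 < q) (y : ℝ) :
    ∫ x : ℝ, w (q - 1) 1 (y - x) * w (p - 1) 1 x = w (p + q - 1) 1 y := by
  rcases le_or_gt y 0 with hy | hy
  · rw [show w (p + q - 1) 1 y = 0 from by rw [w, if_neg (by linarith)]]
    rw [show (fun x => w (q - 1) 1 (y - x) * w (p - 1) 1 x) = fun _ => (0:ℝ) from ?_,
      integral_zero]
    funext x
    rcases le_or_gt x 0 with hx | hx
    · rw [show w (p - 1) 1 x = 0 from by rw [w, if_neg (by linarith)], mul_zero]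
    · rw [show w (q - 1) 1 (y - x) = 0 from by rw [w, if_neg (by linarith)], zero_mul]
  · have hgpos := Real.Gamma_pos_of_pos hp
    have hgq := Real.Gamma_pos_of_pos hq
    have h1 : ∀ x : ℝ, w (q - 1) 1 (y - x) * w (p - 1) 1 x
        = Set.indicator (Set.Ioo 0 y)
            (fun x => Real.exp (-y) / (Real.Gamma p * Real.Gamma q)
              * (x ^ (p - 1) * (y - x) ^ (q - 1))) x := by
      intro x
      rw [Set.indicator_apply]
      by_cases hx : x ∈ Set.Ioo 0 y
      · obtain ⟨hx1, hx2⟩ := hx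
        rw [if_pos ⟨hx1, hx2⟩, w, w, if_pos (by linarith), if_pos hx1]
        simp only [Real.one_rpow, one_mul, sub_add_cancel]
        rw [show Real.exp (-y) = Real.exp (-(y - x)) * Real.exp (-x) by
          rw [← Real.exp_add]; ring_nf]
        field_simp
      · rw [if_neg hx]
        rw [Set.mem_Ioo, not_and_or] at hx
        rcases hx with hx | hx
        · rw [show w (p - 1) 1 x = 0 from by rw [w, if_neg (by simpa using hx)], mul_zero]
        · rw [show w (q - 1) 1 (y - x) = 0 from by
            rw [w, if_neg (by push_neg at hx ⊢; linarith)], zero_mul]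
    simp_rw [h1]
    rw [integral_indicator measurableSet_Ioo, integral_const_mul _ _,
      ← integral_Ioc_eq_integral_Ioo, ← intervalIntegral.integral_of_le hy.le,
      realBeta hp hq hy, w, if_pos hy]
    simp only [Real.one_rpow, one_mul]
    rw [show p + q - 1 + 1 = p + q by ring]
    have hgpq := Real.Gamma_pos_of_pos (by linarith : (0:ℝ) < p + q)
    field_simp

lemma gamma_ratio {x : ℝ} (hx : 0 < x) (k : ℕ) :
    Real.Gamma (x + k) = (ascPochhammer ℝ k).eval x * Real.Gamma x := by
  induction k with
  | zero => simp
  | succ n ih =>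
    rw [show x + ((n + 1 : ℕ) : ℝ) = (x + n) + 1 by push_cast; ring,
      Real.Gamma_add_one (by positivity), ih, ascPochhammer_succ_eval]
    ring

lemma ascPochhammer_eval_pos {x : ℝ} (hx : 0 < x) (k : ℕ) :
    0 < (ascPochhammer ℝ k).eval x := by
  induction k with
  | zero => simp
  | succ n ih =>
    rw [ascPochhammer_succ_eval]
    exact mul_pos ih (by positivity)

lemma pow_mul_w {a : ℝ} (ha : 0 ≤ a) (l : ℕ) (x : ℝ) :
    x ^ l * w a 1 x
      = (Real.Gamma (a + 1 + l) / Real.Gamma (a + 1)) * w (a + l) 1 x := by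
  rw [w, w]
  split_ifs with h
  · simp only [Real.one_rpow, one_mul]
    rw [show a + (l:ℝ) + 1 = a + 1 + l by ring, Real.rpow_add h, Real.rpow_natCast,
      gamma_ratio (by positivity : (0:ℝ) < a + 1) l]
    have h1 := Real.Gamma_pos_of_pos (by positivity : (0:ℝ) < a + 1)
    have h2 : (ascPochhammer ℝ l).eval (a + 1) ≠ 0 :=
      (ascPochhammer_eval_pos (by positivity) l).ne'
    field_simp
  · simp

lemma entry {a q : ℝ} (ha : 0 ≤ a) (hq : 0 < q) (k l : ℕ) :
    ∫ y : ℝ, ∫ x : ℝ, y ^ k * w (q - 1) 1 (y - x) * x ^ l * w a 1 x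
      = (Real.Gamma (a + 1 + l) / Real.Gamma (a + 1))
        * (ascPochhammer ℝ k).eval ((l : ℝ) + (a + q + 1)) := by
  set m : ℝ := Real.Gamma (a + 1 + l) / Real.Gamma (a + 1) with hm
  have inner : ∀ y : ℝ, (∫ x : ℝ, y ^ k * w (q - 1) 1 (y - x) * x ^ l * w a 1 x)
      = m * (y ^ k * w (a + l + 1 + q - 1) 1 y) := by
    intro y
    have key : ∀ x : ℝ, y ^ k * w (q - 1) 1 (y - x) * x ^ l * w a 1 x
        = (y ^ k * m) * (w (q - 1) 1 (y - x) * w (a + l + 1 - 1) 1 x) := by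
      intro x
      rw [show a + (l:ℝ) + 1 - 1 = a + l by ring]
      calc y ^ k * w (q - 1) 1 (y - x) * x ^ l * w a 1 x
          = y ^ k * w (q - 1) 1 (y - x) * (x ^ l * w a 1 x) := by ring
        _ = _ := by rw [pow_mul_w ha]; ring
    simp only [key]
    rw [integral_const_mul, conv (by positivity) hq y]
    ring
  simp only [inner]
  rw [integral_const_mul,
    show (fun y : ℝ => y ^ k * w (a + ↑l + 1 + q - 1) 1 y)
      = fun y : ℝ => y ^ k * w ((a + ↑l + q + 1) - 1) 1 y from by
        funext y; rw [show a + ↑l + 1 + q - 1 = a + ↑l + q + 1 - 1 by ring],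
    moment (by positivity) k,
    gamma_ratio (by positivity : (0:ℝ) < a + ↑l + q + 1) k]
  have h1 := Real.Gamma_pos_of_pos (by positivity : (0:ℝ) < a + ↑l + q + 1)
  rw [show (l:ℝ) + (a + q + 1) = a + ↑l + q + 1 by ring]
  field_simp

lemma momentDet_eq (N t s : ℕ) (hN : 0 < N) (hs : 0 < s) (hst : s < t) (n : ℕ) :
    momentDet N t s n = ∏ j : Fin (n + 1),
      ((Nat.factorial (j : ℕ) : ℝ)
        * (Real.Gamma ((N : ℝ) * ((s : ℝ) - 1) + 1 + ((j : ℕ) : ℝ))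
            / Real.Gamma ((N : ℝ) * ((s : ℝ) - 1) + 1))) := by
  have ha : (0:ℝ) ≤ (N : ℝ) * ((s : ℝ) - 1) := by
    have h1 : (1:ℝ) ≤ (s:ℝ) := by exact_mod_cast hs
    have h2 : (0:ℝ) ≤ (N:ℝ) := Nat.cast_nonneg N
    nlinarith
  have hq : (0:ℝ) < (N : ℝ) * ((t : ℝ) - (s : ℝ)) := by
    have h1 : (s:ℝ) < (t:ℝ) := by exact_mod_cast hst
    have h2 : (0:ℝ) < (N:ℝ) := by exact_mod_cast hN
    nlinarith
  set a : ℝ := (N : ℝ) * ((s : ℝ) - 1) with ha_def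
  set q : ℝ := (N : ℝ) * ((t : ℝ) - (s : ℝ)) with hq_def
  set A : Matrix (Fin (n+1)) (Fin (n+1)) ℝ :=
    Matrix.of fun k l : Fin (n+1) =>
      (ascPochhammer ℝ (k : ℕ)).eval (((l : ℕ) : ℝ) + (a + q + 1)) with hA_def
  have hmat : (Matrix.of fun k l : Fin (n + 1) =>
      ∫ y : ℝ, ∫ x : ℝ,
        y ^ (k : ℕ) * kappa N ((t : ℝ) - s) (y - x) * x ^ (l : ℕ) * w a 1 x)
      = Matrix.of fun k l : Fin (n + 1) =>
          (Real.Gamma (a + 1 + ((l : ℕ) : ℝ)) / Real.Gamma (a + 1)) * A k l := by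
    ext k l
    simp only [Matrix.of_apply, hA_def]
    have hk : kappa N ((t : ℝ) - s) = w (q - 1) 1 := rfl
    rw [hk]
    exact entry ha hq (k : ℕ) (l : ℕ)
  have step1 : momentDet N t s n
      = (∏ j : Fin (n+1), (Real.Gamma (a + 1 + ((j : ℕ) : ℝ)) / Real.Gamma (a + 1))) * A.det := by
    rw [momentDet, hmat]
    exact Matrix.det_mul_row _ A
  have hAt : A.det = (Matrix.of fun i j : Fin (n+1) =>
      (ascPochhammer ℝ (j : ℕ)).eval ((((i : ℕ) : ℝ)) + (a + q + 1))).det := by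
    rw [← Matrix.det_transpose A]
    congr 1
  have step2 : A.det = ((Nat.superFactorial n : ℕ) : ℝ) := by
    rw [hAt,
      ← Matrix.det_eval_matrixOfPolynomials_eq_det_vandermonde
        (fun i : Fin (n+1) => (((i : ℕ) : ℝ)) + (a + q + 1))
        (fun i : Fin (n+1) => ascPochhammer ℝ (i : ℕ))
        (fun i => ascPochhammer_natDegree ℝ (i : ℕ))
        (fun i => monic_ascPochhammer ℝ (i : ℕ)),
      Matrix.det_vandermonde_add (fun i : Fin (n+1) => (((i : ℕ) : ℝ))) (a + q + 1)]
    exact_mod_cast Matrix.det_vandermonde_id_eq_superFactorial (R := ℝ) n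
  have hsf : ((Nat.superFactorial n : ℕ) : ℝ)
      = ∏ j : Fin (n+1), (Nat.factorial (j : ℕ) : ℝ) := by
    rw [Fin.prod_univ_eq_prod_range (fun j => (Nat.factorial j : ℝ)) (n+1), ← Nat.cast_prod]
    exact_mod_cast (Nat.prod_range_succ_factorial n).symm
  rw [step1, step2, hsf, ← Finset.prod_mul_distrib]
  exact Finset.prod_congr rfl fun j _ => by ring


/-- The constants `h_ℓ^{(t,s)} = D_ℓ^{(t,s)}/D_{ℓ-1}^{(t,s)}` (with `D_{-1} := 1`)
equal `ℓ! Γ(N(s-1)+ℓ+1)/Γ(N(s-1)+1)`; in particular they do not depend on `t`. -/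
theorem lup_h_const (N : ℕ) (hN : 0 < N) (t s : ℕ) (hs : 0 < s) (hst : s < t) (l : ℕ) :
    momentDet N t s l / (if l = 0 then 1 else momentDet N t s (l - 1))
      = (l.factorial : ℝ) * Real.Gamma ((N : ℝ) * ((s : ℝ) - 1) + l + 1)
          / Real.Gamma ((N : ℝ) * ((s : ℝ) - 1) + 1) := by
  set a : ℝ := (N : ℝ) * ((s : ℝ) - 1) with ha_def
  have ha : (0:ℝ) ≤ a := by
    have h1 : (1:ℝ) ≤ (s:ℝ) := by exact_mod_cast hs
    have h2 : (0:ℝ) ≤ (N:ℝ) := Nat.cast_nonneg N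
    rw [ha_def]; nlinarith
  cases l with
  | zero =>
    rw [if_pos rfl, momentDet_eq N t s hN hs hst 0]
    simp [Nat.factorial]
    rfl
  | succ n =>
    rw [if_neg (Nat.succ_ne_zero n), Nat.succ_sub_one,
      momentDet_eq N t s hN hs hst (n + 1), momentDet_eq N t s hN hs hst n,
      Fin.prod_univ_castSucc]
    have hpos : (0:ℝ) < ∏ j : Fin (n+1),
        ((Nat.factorial (j : ℕ) : ℝ) * (Real.Gamma (a + 1 + ((j : ℕ) : ℝ)) / Real.Gamma (a + 1))) := by
      refine Finset.prod_pos fun j _ => mul_pos ?_ (div_pos ?_ ?_)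
      · exact_mod_cast Nat.factorial_pos _
      · exact Real.Gamma_pos_of_pos (by positivity)
      · exact Real.Gamma_pos_of_pos (by positivity)
    have hc : ∀ j : Fin (n + 1), ((Fin.castSucc j : Fin (n+2)) : ℕ) = (j : ℕ) :=
      fun j => rfl
    simp only [hc, Fin.val_last]
    rw [mul_comm, mul_div_assoc, div_self hpos.ne', mul_one,
      show a + 1 + ((n + 1 : ℕ) : ℝ) = a + ((n + 1 : ℕ) : ℝ) + 1 by ring]
    push_cast
    ring
end

section
/- Let t > s > 0 be positive integers and N a positive integer. The monic Laguerre polynomials satisfy the bi-orthogonality relation ∫∫_{ℝ²} L̃_k^{N(t−1)}(y) κ_{t−s}(y−x) L̃_ℓ^{N(s−1)}(x) w_{N(s−1),1}(x) dx dy = ℓ! · [Γ(N(s−1)+ℓ+1)/Γ(N(s−1)+1)] · δ_{k,ℓ} for all integers k, ℓ ≥ 0. Equivalently, the unique monic bi-orthogonal families p_n^{(t,s)} and q_n^{(t,s)} with respect to the pairing (p,q) ↦ ∫∫ p(y) κ_{t−s}(y−x) q(x) w_{N(s−1),1}(x) dx dy are p_n^{(t,s)} = L̃_n^{N(t−1)}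 and q_n^{(t,s)} = L̃_n^{N(s−1)}. -/
open MeasureTheory Polynomial Finset


noncomputable def altS (n : ℕ) (f : ℕ → ℝ) : ℝ :=
  ∑ i ∈ Finset.range (n + 1), (-1 : ℝ) ^ (n - i) * (n.choose i : ℝ) * f i

lemma altS_succ (n : ℕ) (f : ℕ → ℝ) :
    altS (n + 1) f = altS n (fun i => f (i + 1) - f i) := by
  unfold altS
  rw [Finset.sum_range_succ' (fun i => (-1 : ℝ) ^ (n + 1 - i) * ((n+1).choose i : ℝ) * f i)]
  have h1 : ∀ i ∈ Finset.range (n + 1),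
      (-1 : ℝ) ^ (n + 1 - (i+1)) * ((n+1).choose (i+1) : ℝ) * f (i+1)
        = (-1 : ℝ) ^ (n - i) * (n.choose i : ℝ) * f (i+1)
          + (-1 : ℝ) ^ (n - i) * (n.choose (i+1) : ℝ) * f (i+1) := by
    intro i _
    have : n + 1 - (i + 1) = n - i := by omega
    rw [this, Nat.choose_succ_succ]
    push_cast
    ring
  rw [Finset.sum_congr rfl h1, Finset.sum_add_distrib]
  have h2 : ∑ i ∈ Finset.range (n + 1), (-1 : ℝ) ^ (n - i) * (n.choose (i+1) : ℝ) * f (i+1)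
      = ∑ i ∈ Finset.range n, (-1 : ℝ) ^ (n - i) * (n.choose (i+1) : ℝ) * f (i+1) := by
    rw [Finset.sum_range_succ, Nat.choose_succ_self]
    simp
  have h3 : ∑ i ∈ Finset.range (n + 1), (-1 : ℝ) ^ (n - i) * (n.choose i : ℝ) * f i
      = ∑ i ∈ Finset.range n, (-1 : ℝ) ^ (n - (i+1)) * (n.choose (i+1) : ℝ) * f (i+1)
        + (-1 : ℝ) ^ n * f 0 := by
    rw [Finset.sum_range_succ' (fun i => (-1 : ℝ) ^ (n - i) * (n.choose i : ℝ) * f i)]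
    simp
  have h4 : ∀ i ∈ Finset.range n,
      (-1 : ℝ) ^ (n - i) * (n.choose (i+1) : ℝ) * f (i+1)
        = -((-1 : ℝ) ^ (n - (i+1)) * (n.choose (i+1) : ℝ) * f (i+1)) := by
    intro i hi
    have hi' : i < n := Finset.mem_range.mp hi
    have : n - i = (n - (i+1)) + 1 := by omega
    rw [this, pow_succ]
    ring
  have h5 : ∑ i ∈ Finset.range (n+1), (-1:ℝ)^(n-i) * (n.choose i : ℝ) * (f (i+1) - f i)
      = ∑ i ∈ Finset.range (n+1), ((-1:ℝ)^(n-i) * (n.choose i : ℝ) * f (i+1)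
          - (-1:ℝ)^(n-i) * (n.choose i : ℝ) * f i) := by
    apply Finset.sum_congr rfl; intros; ring
  rw [h5, Finset.sum_sub_distrib, h2, Finset.sum_congr rfl h4, h3]
  simp only [Finset.sum_neg_distrib]
  have : (-1:ℝ) ^ (n + 1 - 0) * ((n+1).choose 0 : ℝ) * f 0 = -((-1:ℝ)^n * f 0) := by
    simp [pow_succ]
  rw [this]
  ring

lemma taylor_one_coeff (P : ℝ[X]) (n : ℕ) (hP : P.natDegree ≤ n + 1) (m : ℕ) :
    (Polynomial.taylor (1:ℝ) P).coeff m
      = ∑ i ∈ Finset.range (n + 2), ((i + m).choose m : ℝ) * P.coeff (i + m) := by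
  rw [Polynomial.taylor_coeff]
  rw [Polynomial.eval_eq_sum_range' (n := n + 2)
    (lt_of_le_of_lt (le_trans (Polynomial.natDegree_hasseDeriv_le P m)
      (by omega : P.natDegree - m ≤ n + 1)) (by omega))]
  apply Finset.sum_congr rfl
  intro i _
  rw [Polynomial.hasseDeriv_coeff]
  push_cast
  ring

lemma altS_poly : ∀ (n : ℕ) (P : ℝ[X]), P.degree ≤ (n : ℕ) →
    altS n (fun i => P.eval (i : ℝ)) = (n.factorial : ℝ) * P.coeff n := by
  intro n
  induction n with
  | zero =>
    intro P hP
    simp [altS, Polynomial.coeff_zero_eq_eval_zero]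
  | succ n ih =>
    intro P hP
    have hnd : P.natDegree ≤ n + 1 := Polynomial.natDegree_le_iff_degree_le.mpr (by exact_mod_cast hP)
    set Q : ℝ[X] := Polynomial.taylor (1:ℝ) P - P with hQ
    have hQev : ∀ i : ℕ, Q.eval (i : ℝ) = P.eval ((i + 1 : ℕ) : ℝ) - P.eval (i : ℝ) := by
      intro i
      rw [hQ, Polynomial.eval_sub, Polynomial.taylor_eval]
      push_cast
      ring_nf
    have hcoeff : ∀ m : ℕ, n + 1 ≤ m → (Polynomial.taylor (1:ℝ) P).coeff m = P.coeff m := by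
      intro m hm
      rw [taylor_one_coeff P n hnd m]
      rw [Finset.sum_eq_single 0]
      · simp
      · intro i _ hi
        have : P.coeff (i + m) = 0 :=
          Polynomial.coeff_eq_zero_of_natDegree_lt (by omega)
        simp [this]
      · intro h; simp at h
    have hdegQ : Q.degree ≤ (n : ℕ) := by
      rw [Polynomial.degree_le_iff_coeff_zero]
      intro m hm
      have hm' : n + 1 ≤ m := by exact_mod_cast Nat.add_one_le_iff.mpr (by exact_mod_cast hm)
      rw [hQ, Polynomial.coeff_sub, hcoeff m hm', sub_self]
    have hcoeffQ : Q.coeff n = ((n : ℝ) + 1) * P.coeff (n + 1) := by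
      rw [hQ, Polynomial.coeff_sub, taylor_one_coeff P n hnd n]
      have hsub : Finset.range 2 ⊆ Finset.range (n + 2) := by
        apply Finset.range_subset_range.mpr; omega
      rw [← Finset.sum_subset hsub]
      · rw [Finset.sum_range_succ, Finset.sum_range_one]
        simp only [Nat.choose_self, zero_add, Nat.cast_one, one_mul]
        rw [Nat.add_comm 1 n, Nat.choose_succ_self_right]
        push_cast
        ring
      · intro i _ hi2
        have hi2' : 2 ≤ i := by simpa using Nat.not_lt.mp (by simpa using hi2)
        have : P.coeff (i + n) = 0 :=
          Polynomial.coeff_eq_zero_of_natDegree_lt (by omega)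
        simp [this]
    rw [altS_succ]
    calc altS n (fun i => P.eval ((i + 1 : ℕ) : ℝ) - P.eval (i : ℝ))
        = altS n (fun i => Q.eval (i : ℝ)) := by
          unfold altS; apply Finset.sum_congr rfl; intro i _; dsimp only; rw [hQev i]
      _ = (n.factorial : ℝ) * Q.coeff n := ih Q hdegQ
      _ = ((n+1).factorial : ℝ) * P.coeff (n + 1) := by
          rw [hcoeffQ, Nat.factorial_succ]
          push_cast
          ring

/-- `pp x n = x (x+1) ⋯ (x+n-1)`. -/
noncomputable def pp (x : ℝ) (n : ℕ) : ℝ := ∏ r ∈ Finset.range n, (x + r)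

lemma Gamma_pp {x : ℝ} (hx : 0 < x) (n : ℕ) :
    Real.Gamma (x + n) = Real.Gamma x * pp x n := by
  induction n with
  | zero => simp [pp]
  | succ n ih =>
    have h1 : x + ((n : ℝ) + 1) = (x + n) + 1 := by ring
    have h2 : x + (n : ℝ) ≠ 0 := by positivity
    rw [show ((n+1 : ℕ) : ℝ) = (n : ℝ) + 1 by push_cast; ring, h1,
      Real.Gamma_add_one h2, ih]
    simp only [pp, Finset.prod_range_succ]
    ring

lemma pp_pos {x : ℝ} (hx : 0 < x) (n : ℕ) : 0 < pp x n := by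
  unfold pp
  apply Finset.prod_pos
  intro r _
  positivity

/-- The key alternating-sum identity. -/
lemma alt_sum_pp (d n : ℕ) (hdn : d ≤ n) (x : ℝ) :
    ∑ i ∈ Finset.range (n + 1), (-1 : ℝ) ^ (n - i) * (n.choose i : ℝ) * pp (x + i) d
      = if d = n then (n.factorial : ℝ) else 0 := by
  set P : ℝ[X] := ∏ r ∈ Finset.range d, (X + C (x + r)) with hPdef
  have hmonic : P.Monic := Polynomial.monic_prod_of_monic _ _ fun r _ => Polynomial.monic_X_add_C _
  have hnd : P.natDegree = d := by
    rw [hPdef, Polynomial.natDegree_prod _ _ (fun r _ => (Polynomial.monic_X_add_C _).ne_zero)]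
    simp only [Polynomial.natDegree_X_add_C]
    simp
  have hdeg : P.degree ≤ (n : ℕ) := by
    refine le_trans Polynomial.degree_le_natDegree ?_
    rw [hnd]
    exact_mod_cast hdn
  have heval : ∀ i : ℕ, P.eval (i : ℝ) = pp (x + i) d := by
    intro i
    rw [hPdef, Polynomial.eval_prod, pp]
    apply Finset.prod_congr rfl
    intro r _
    simp
    ring
  have hsum : ∑ i ∈ Finset.range (n + 1), (-1 : ℝ) ^ (n - i) * (n.choose i : ℝ) * pp (x + i) d
      = altS n (fun i => P.eval (i : ℝ)) := by
    unfold altS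
    apply Finset.sum_congr rfl
    intro i _
    dsimp only
    rw [heval i]
  rw [hsum, altS_poly n P hdeg]
  by_cases h : d = n
  · subst h
    rw [if_pos rfl, ← hnd, hmonic.coeff_natDegree, mul_one]
  · rw [if_neg h]
    have : P.coeff n = 0 := Polynomial.coeff_eq_zero_of_natDegree_lt (by omega)
    rw [this, mul_zero]

lemma choose_div {n i : ℕ} (h : i ≤ n) :
    (n.factorial : ℝ) / ((n - i).factorial : ℝ) / (i.factorial : ℝ) = (n.choose i : ℝ) := by
  rw [Nat.cast_choose ℝ h, div_div, mul_comm]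

lemma algebra_key (A c : ℝ) (hA : 0 < A) (hc : 0 < c) (k l : ℕ) :
    (∑ j ∈ Finset.range (l+1), ∑ m ∈ Finset.range (k+1),
      ((-1:ℝ)^(k-m) * ((k.factorial:ℝ)/((k-m).factorial : ℝ))
          * (Real.Gamma (A+c+k)/Real.Gamma (A+c+m)) / (m.factorial : ℝ))
      * (((-1:ℝ)^(l-j) * ((l.factorial:ℝ)/((l-j).factorial : ℝ))
          * (Real.Gamma (A+l)/Real.Gamma (A+j)) / (j.factorial : ℝ))
        * (Real.Gamma (A+j)/Real.Gamma A))
      * (Real.Gamma (A+c+j+m)/Real.Gamma (A+c+j)))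
    = if k = l then (l.factorial:ℝ) * Real.Gamma (A+l) / Real.Gamma A else 0 := by
  have hGA : Real.Gamma A ≠ 0 := (Real.Gamma_pos_of_pos hA).ne'
  have hGAl : Real.Gamma (A + l) ≠ 0 := (Real.Gamma_pos_of_pos (by positivity)).ne'
  -- termwise identity (dagger)
  have dag : ∀ j m : ℕ, j ≤ l → m ≤ k →
      ((-1:ℝ)^(k-m) * ((k.factorial:ℝ)/((k-m).factorial : ℝ))
          * (Real.Gamma (A+c+k)/Real.Gamma (A+c+m)) / (m.factorial : ℝ))
      * (((-1:ℝ)^(l-j) * ((l.factorial:ℝ)/((l-j).factorial : ℝ))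
          * (Real.Gamma (A+l)/Real.Gamma (A+j)) / (j.factorial : ℝ))
        * (Real.Gamma (A+j)/Real.Gamma A))
      * (Real.Gamma (A+c+j+m)/Real.Gamma (A+c+j))
      = (Real.Gamma (A+l) / Real.Gamma A * ((-1:ℝ)^(l-j) * (l.choose j : ℝ))
          * (Real.Gamma (A+c+k)/Real.Gamma (A+c+j)))
        * ((-1:ℝ)^(k-m) * (k.choose m : ℝ) * pp (A+c+m) j) := by
    intro j m hj hm
    have hG : Real.Gamma (A+c+j+m) = Real.Gamma (A+c+m) * pp (A+c+m) j := by
      rw [show A+c+(j:ℝ)+(m:ℝ) = (A+c+(m:ℝ)) + (j:ℝ) by ring]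
      exact Gamma_pp (by positivity) j
    rw [hG, ← choose_div hj, ← choose_div hm]
    have h1 : Real.Gamma (A + c + m) ≠ 0 := (Real.Gamma_pos_of_pos (by positivity)).ne'
    have h2 : Real.Gamma (A + c + j) ≠ 0 := (Real.Gamma_pos_of_pos (by positivity)).ne'
    have h3 : Real.Gamma (A + j) ≠ 0 := (Real.Gamma_pos_of_pos (by positivity)).ne'
    have h4 : ((m.factorial : ℝ)) ≠ 0 := by positivity
    have h5 : ((j.factorial : ℝ)) ≠ 0 := by positivity
    have h6 : (((k-m).factorial : ℝ)) ≠ 0 := by positivity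
    have h7 : (((l-j).factorial : ℝ)) ≠ 0 := by positivity
    field_simp
  -- termwise identity (ddagger)
  have ddag : ∀ j m : ℕ, j ≤ l → m ≤ k →
      ((-1:ℝ)^(k-m) * ((k.factorial:ℝ)/((k-m).factorial : ℝ))
          * (Real.Gamma (A+c+k)/Real.Gamma (A+c+m)) / (m.factorial : ℝ))
      * (((-1:ℝ)^(l-j) * ((l.factorial:ℝ)/((l-j).factorial : ℝ))
          * (Real.Gamma (A+l)/Real.Gamma (A+j)) / (j.factorial : ℝ))
        * (Real.Gamma (A+j)/Real.Gamma A))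
      * (Real.Gamma (A+c+j+m)/Real.Gamma (A+c+j))
      = (Real.Gamma (A+l) / Real.Gamma A * ((-1:ℝ)^(k-m) * (k.choose m : ℝ))
          * (Real.Gamma (A+c+k)/Real.Gamma (A+c+m)))
        * ((-1:ℝ)^(l-j) * (l.choose j : ℝ) * pp (A+c+j) m) := by
    intro j m hj hm
    have hG : Real.Gamma (A+c+j+m) = Real.Gamma (A+c+j) * pp (A+c+j) m := by
      exact Gamma_pp (by positivity) m
    rw [hG, ← choose_div hj, ← choose_div hm]
    have h1 : Real.Gamma (A + c + m) ≠ 0 := (Real.Gamma_pos_of_pos (by positivity)).ne'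
    have h2 : Real.Gamma (A + c + j) ≠ 0 := (Real.Gamma_pos_of_pos (by positivity)).ne'
    have h3 : Real.Gamma (A + j) ≠ 0 := (Real.Gamma_pos_of_pos (by positivity)).ne'
    have h4 : ((m.factorial : ℝ)) ≠ 0 := by positivity
    have h5 : ((j.factorial : ℝ)) ≠ 0 := by positivity
    have h6 : (((k-m).factorial : ℝ)) ≠ 0 := by positivity
    have h7 : (((l-j).factorial : ℝ)) ≠ 0 := by positivity
    field_simp
  rcases lt_trichotomy l k with hlk | heq | hkl
  · -- l < k : every j-row vanishes
    rw [if_neg (by omega)]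
    apply Finset.sum_eq_zero
    intro j hj
    have hjl : j ≤ l := by simpa [Nat.lt_succ_iff] using hj
    calc (∑ m ∈ Finset.range (k+1), _)
        = (Real.Gamma (A+l) / Real.Gamma A * ((-1:ℝ)^(l-j) * (l.choose j : ℝ))
            * (Real.Gamma (A+c+k)/Real.Gamma (A+c+j)))
          * ∑ m ∈ Finset.range (k+1), (-1:ℝ)^(k-m) * (k.choose m : ℝ) * pp ((A+c) + m) j := by
          rw [Finset.mul_sum]
          apply Finset.sum_congr rfl
          intro m hm
          exact dag j m hjl (by simpa [Nat.lt_succ_iff] using hm)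
      _ = 0 := by
          rw [alt_sum_pp j k (by omega) (A+c), if_neg (by omega), mul_zero]
  · -- k = l
    subst heq
    rw [if_pos rfl]
    have hrow : ∀ j ∈ Finset.range (l+1),
        (∑ m ∈ Finset.range (l+1),
      ((-1:ℝ)^(l-m) * ((l.factorial:ℝ)/((l-m).factorial : ℝ))
          * (Real.Gamma (A+c+l)/Real.Gamma (A+c+m)) / (m.factorial : ℝ))
      * (((-1:ℝ)^(l-j) * ((l.factorial:ℝ)/((l-j).factorial : ℝ))
          * (Real.Gamma (A+l)/Real.Gamma (A+j)) / (j.factorial : ℝ))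
        * (Real.Gamma (A+j)/Real.Gamma A))
      * (Real.Gamma (A+c+j+m)/Real.Gamma (A+c+j)))
        = if j = l then
            (Real.Gamma (A+l) / Real.Gamma A * ((-1:ℝ)^(l-j) * (l.choose j : ℝ))
              * (Real.Gamma (A+c+l)/Real.Gamma (A+c+j))) * (l.factorial : ℝ)
          else 0 := by
      intro j hj
      have hjl : j ≤ l := by simpa [Nat.lt_succ_iff] using hj
      calc _ = (Real.Gamma (A+l) / Real.Gamma A * ((-1:ℝ)^(l-j) * (l.choose j : ℝ))
              * (Real.Gamma (A+c+l)/Real.Gamma (A+c+j)))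
            * ∑ m ∈ Finset.range (l+1), (-1:ℝ)^(l-m) * (l.choose m : ℝ) * pp ((A+c) + m) j := by
              rw [Finset.mul_sum]
              apply Finset.sum_congr rfl
              intro m hm
              exact dag j m hjl (by simpa [Nat.lt_succ_iff] using hm)
        _ = _ := by
              rw [alt_sum_pp j l hjl (A+c)]
              by_cases h : j = l
              · rw [if_pos h, if_pos h]
              · rw [if_neg h, if_neg h, mul_zero]
    rw [Finset.sum_congr rfl hrow, Finset.sum_ite_eq' (Finset.range (l+1)) l]
    rw [if_pos (Finset.self_mem_range_succ l)]
    have h2 : Real.Gamma (A + c + l) ≠ 0 := (Real.Gamma_pos_of_pos (by positivity)).ne'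
    simp only [Nat.sub_self, pow_zero, Nat.choose_self, Nat.cast_one, one_mul, mul_one]
    field_simp
  · -- k < l : swap order, every m-row vanishes
    rw [if_neg (by omega), Finset.sum_comm]
    apply Finset.sum_eq_zero
    intro m hm
    have hmk : m ≤ k := by simpa [Nat.lt_succ_iff] using hm
    calc (∑ j ∈ Finset.range (l+1), _)
        = (Real.Gamma (A+l) / Real.Gamma A * ((-1:ℝ)^(k-m) * (k.choose m : ℝ))
            * (Real.Gamma (A+c+k)/Real.Gamma (A+c+m)))
          * ∑ j ∈ Finset.range (l+1), (-1:ℝ)^(l-j) * (l.choose j : ℝ) * pp ((A+c) + j) m := by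
          rw [Finset.mul_sum]
          apply Finset.sum_congr rfl
          intro j hj
          exact ddag j m (by simpa [Nat.lt_succ_iff] using hj) hmk
      _ = 0 := by
          rw [alt_sum_pp m l (by omega) (A+c), if_neg (by omega), mul_zero]

noncomputable def W (p x : ℝ) : ℝ :=
  if 0 < x then x ^ (p-1) * Real.exp (-x) / Real.Gamma p else 0

lemma W_nonneg {p : ℝ} (hp : 0 < p) (x : ℝ) : 0 ≤ W p x := by
  unfold W
  split_ifs with h
  · have := Real.Gamma_pos_of_pos hp
    positivity
  · exact le_refl 0

lemma W_meas {p : ℝ} (hp : 1 ≤ p) : Measurable (W p) := by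
  unfold W
  exact Measurable.ite (measurableSet_lt measurable_const measurable_id)
    ((((Real.continuous_rpow_const (by linarith)).mul
      (Real.continuous_exp.comp continuous_neg)).div_const _).measurable)
    measurable_const

lemma W_indicator {p : ℝ} :
    W p = Set.indicator (Set.Ioi (0:ℝ)) (fun x => Real.exp (-x) * x ^ (p-1) / Real.Gamma p) := by
  funext x
  by_cases h : 0 < x
  · rw [Set.indicator_of_mem (Set.mem_Ioi.mpr h)]
    unfold W; rw [if_pos h]; ring
  · rw [Set.indicator_of_notMem (by simpa using h)]
    unfold W; rw [if_neg h]

lemma W_integrable {p : ℝ} (hp : 0 < p) : Integrable (W p) := by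
  rw [W_indicator, integrable_indicator_iff measurableSet_Ioi]
  exact (Real.GammaIntegral_convergent hp).div_const _

lemma W_integral {p : ℝ} (hp : 0 < p) : ∫ x, W p x = 1 := by
  rw [W_indicator, integral_indicator measurableSet_Ioi, integral_div,
    ← Real.Gamma_eq_integral hp, div_self (Real.Gamma_pos_of_pos hp).ne']

lemma W_pow_eq {p : ℝ} (hp : 0 < p) (j : ℕ) (x : ℝ) :
    x ^ j * W p x = (Real.Gamma (p + j) / Real.Gamma p) * W (p + j) x := by
  unfold W
  by_cases h : 0 < x
  · rw [if_pos h, if_pos h]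
    have hΓ : Real.Gamma p ≠ 0 := (Real.Gamma_pos_of_pos hp).ne'
    have hΓ2 : Real.Gamma (p + j) ≠ 0 := (Real.Gamma_pos_of_pos (by positivity)).ne'
    have hx : (x:ℝ) ^ (j:ℕ) * x ^ (p-1) = x ^ (p + j - 1) := by
      rw [← Real.rpow_natCast x j, ← Real.rpow_add h]
      ring_nf
    field_simp
    rw [← hx]
  · rw [if_neg h, if_neg h, mul_zero, mul_zero]

lemma W_pow_integrable {p : ℝ} (hp : 0 < p) (j : ℕ) :
    Integrable (fun x => x ^ j * W p x) := by
  simp only [W_pow_eq hp j]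
  exact (W_integrable (by positivity)).const_mul _

lemma W_moment {p : ℝ} (hp : 0 < p) (j : ℕ) :
    ∫ x, x ^ j * W p x = Real.Gamma (p + j) / Real.Gamma p := by
  simp only [W_pow_eq hp j]
  rw [integral_const_mul, W_integral (by positivity), mul_one]

lemma W_bound {c : ℝ} (hc : 1 ≤ c) : ∃ M, ∀ x, |W c x| ≤ M := by
  refine ⟨Real.exp ((c-1) * (Real.log (c-1) - 1)) / Real.Gamma c, fun x => ?_⟩
  have hc0 : (0:ℝ) < c := by linarith
  have hΓ : 0 < Real.Gamma c := Real.Gamma_pos_of_pos hc0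
  rw [abs_of_nonneg (W_nonneg hc0 x)]
  unfold W
  split_ifs with hx
  · gcongr
    rw [Real.rpow_def_of_pos hx, ← Real.exp_add]
    apply Real.exp_le_exp.mpr
    rcases eq_or_lt_of_le hc with h1 | h1
    · rw [← h1]
      norm_num
      linarith
    · have hc1 : 0 < c - 1 := by linarith
      have hlog : Real.log (x / (c-1)) ≤ x/(c-1) - 1 :=
        Real.log_le_sub_one_of_pos (by positivity)
      rw [Real.log_div hx.ne' hc1.ne'] at hlog
      have h2 := mul_le_mul_of_nonneg_left hlog hc1.le
      have h3 : (c-1) * (x/(c-1)) = x := by field_simp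
      nlinarith [h2, h3]
  · positivity

lemma real_beta_s11 {p q : ℝ} (hp : 0 < p) (hq : 0 < q) :
    ∫ u in (0:ℝ)..1, u ^ (p-1) * (1-u) ^ (q-1)
      = Real.Gamma p * Real.Gamma q / Real.Gamma (p+q) := by
  have h := Complex.Gamma_mul_Gamma_eq_betaIntegral (s := (p:ℂ)) (t := (q:ℂ))
    (by simpa using hp) (by simpa using hq)
  have hbeta : Complex.betaIntegral p q
      = ((∫ u in (0:ℝ)..1, u ^ (p-1) * (1-u) ^ (q-1) : ℝ) : ℂ) := by
    rw [Complex.betaIntegral, ← intervalIntegral.integral_ofReal]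
    apply intervalIntegral.integral_congr
    intro x hx
    rw [Set.uIcc_of_le zero_le_one] at hx
    obtain ⟨hx0, hx1⟩ := hx
    dsimp only
    rw [show ((p:ℂ) - 1) = ((p - 1 : ℝ) : ℂ) by push_cast; ring,
      show ((q:ℂ) - 1) = ((q - 1 : ℝ) : ℂ) by push_cast; ring,
      show ((1:ℂ) - (x:ℂ)) = ((1 - x : ℝ) : ℂ) by push_cast; ring,
      ← Complex.ofReal_cpow hx0, ← Complex.ofReal_cpow (by linarith : (0:ℝ) ≤ 1 - x)]
    push_cast
    ring
  rw [hbeta, show ((p:ℂ) + (q:ℂ)) = ((p+q : ℝ) : ℂ) by push_cast; ring,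
    Complex.Gamma_ofReal, Complex.Gamma_ofReal, Complex.Gamma_ofReal] at h
  have h' : Real.Gamma p * Real.Gamma q
      = Real.Gamma (p+q) * ∫ u in (0:ℝ)..1, u ^ (p-1) * (1-u) ^ (q-1) := by
    exact_mod_cast h
  have hne : Real.Gamma (p+q) ≠ 0 := (Real.Gamma_pos_of_pos (by positivity)).ne'
  rw [eq_div_iff hne]
  linarith [h']

lemma W_conv {p q : ℝ} (hp : 0 < p) (hq : 0 < q) (y : ℝ) :
    ∫ x, W p (y - x) * W q x = W (p + q) y := by
  by_cases hy : 0 < y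
  · have hΓp : Real.Gamma p ≠ 0 := (Real.Gamma_pos_of_pos hp).ne'
    have hΓq : Real.Gamma q ≠ 0 := (Real.Gamma_pos_of_pos hq).ne'
    have h1 : (fun x => W p (y - x) * W q x)
        = Set.indicator (Set.Ioo 0 y) (fun x =>
            (y-x) ^ (p-1) * Real.exp (-(y-x)) / Real.Gamma p
              * (x ^ (q-1) * Real.exp (-x) / Real.Gamma q)) := by
      funext x
      by_cases hx : 0 < x
      · by_cases hxy : x < y
        · rw [Set.indicator_of_mem (by exact ⟨hx, hxy⟩)]
          simp only [W]
          rw [if_pos hx, if_pos (by linarith : (0:ℝ) < y - x)]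
        · rw [Set.indicator_of_notMem (fun h => hxy h.2)]
          simp only [W]
          rw [if_neg (by push_neg at hxy ⊢; linarith : ¬ (0:ℝ) < y - x), zero_mul]
      · rw [Set.indicator_of_notMem (fun h => hx h.1)]
        simp only [W]
        rw [if_neg hx, mul_zero]
    rw [h1, integral_indicator measurableSet_Ioo]
    have h2 : ∀ x ∈ Set.Ioo (0:ℝ) y,
        (y-x) ^ (p-1) * Real.exp (-(y-x)) / Real.Gamma p
          * (x ^ (q-1) * Real.exp (-x) / Real.Gamma q)
        = (y-x) ^ (p-1) * x ^ (q-1) * (Real.exp (-y) / (Real.Gamma p * Real.Gamma q)) := by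
      intro x _
      rw [div_mul_div_comm,
        show (y-x) ^ (p-1) * Real.exp (-(y-x)) * (x ^ (q-1) * Real.exp (-x))
          = (y-x) ^ (p-1) * x ^ (q-1) * (Real.exp (-(y-x)) * Real.exp (-x)) by ring,
        ← Real.exp_add, show -(y-x) + -x = -y by ring, mul_div_assoc]
    rw [setIntegral_congr_fun measurableSet_Ioo h2, integral_mul_const]
    have h3 : ∫ x in Set.Ioo (0:ℝ) y, (y-x) ^ (p-1) * x ^ (q-1)
        = y ^ (p+q-1) * (Real.Gamma q * Real.Gamma p / Real.Gamma (q+p)) := by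
      rw [← integral_Ioc_eq_integral_Ioo, ← intervalIntegral.integral_of_le hy.le]
      have hsub := intervalIntegral.smul_integral_comp_mul_left
        (a := (0:ℝ)) (b := 1) (fun x => (y-x) ^ (p-1) * x ^ (q-1)) y
      simp only [mul_zero, mul_one] at hsub
      rw [← hsub]
      have h4 : ∀ u ∈ Set.uIcc (0:ℝ) 1, (y - y*u) ^ (p-1) * (y*u) ^ (q-1)
          = (y ^ (p-1) * y ^ (q-1)) * ((1-u) ^ (p-1) * u ^ (q-1)) := by
        intro u hu
        rw [Set.uIcc_of_le zero_le_one] at hu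
        obtain ⟨h0u, hu1⟩ := hu
        rw [show y - y*u = y * (1-u) by ring, Real.mul_rpow hy.le (by linarith),
          Real.mul_rpow hy.le h0u]
        ring
      rw [intervalIntegral.integral_congr h4, intervalIntegral.integral_const_mul]
      have h5 : ∀ u ∈ Set.uIcc (0:ℝ) 1, (1-u) ^ (p-1) * u ^ (q-1)
          = u ^ (q-1) * (1-u) ^ (p-1) := by
        intro u _; ring
      rw [intervalIntegral.integral_congr h5, real_beta_s11 hq hp, smul_eq_mul]
      have e1 : y ^ (p-1) * y ^ (q-1) = y ^ (p+q-2) := by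
        rw [← Real.rpow_add hy]; ring_nf
      have e2 : y * (y ^ (p-1) * y ^ (q-1)) = y ^ (p+q-1) := by
        rw [e1, show (y : ℝ) * y ^ (p+q-2) = y ^ (1:ℝ) * y ^ (p+q-2) by rw [Real.rpow_one],
          ← Real.rpow_add hy]
        ring_nf
      rw [← mul_assoc, e2]
    rw [h3]
    simp only [W]
    rw [if_pos hy]
    have hΓpq : Real.Gamma (p+q) ≠ 0 := (Real.Gamma_pos_of_pos (by positivity)).ne'
    rw [show q + p = p + q by ring]
    field_simp
  · have h0 : (fun x => W p (y - x) * W q x) = fun _ => 0 := by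
      funext x
      by_cases hx : 0 < x
      · have hyx : ¬ (0:ℝ) < y - x := by push_neg at hy ⊢; linarith
        simp only [W]
        rw [if_neg hyx, zero_mul]
      · simp only [W]
        rw [if_neg hx, mul_zero]
    rw [h0, integral_zero]
    unfold W
    rw [if_neg hy]

lemma W_conv_integrable {p q : ℝ} (hp : 1 ≤ p) (hq : 0 < q) (y : ℝ) :
    Integrable (fun x => W p (y - x) * W q x) := by
  obtain ⟨M, hM⟩ := W_bound hp
  exact Integrable.bdd_mul (c := M) (W_integrable hq)
    ((W_meas hp).comp (measurable_const.sub measurable_id)).aestronglyMeasurable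
    (ae_of_all _ fun x => by simpa [Real.norm_eq_abs] using hM (y - x))
/-- The monic Laguerre polynomial with index `a`:
`L̃_n^a(x) = Σ_{k=0}^n (-1)^{n-k} (n!/(n-k)!) (Γ(a+n+1)/Γ(a+k+1)) x^k/k!`. -/
noncomputable def Lag (a : ℝ) (n : ℕ) (x : ℝ) : ℝ :=
  ∑ k ∈ Finset.range (n + 1),
    (-1 : ℝ) ^ (n - k) * ((n.factorial : ℝ) / ((n - k).factorial : ℝ))
      * (Real.Gamma (a + n + 1) / Real.Gamma (a + k + 1)) * x ^ k / (k.factorial : ℝ)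

lemma w_eq_W (a x : ℝ) : w a 1 x = W (a + 1) x := by
  unfold w W
  split_ifs with h
  · rw [Real.one_rpow, show a + 1 - 1 = a by ring, one_mul]
    ring
  · rfl

/-- The monic Laguerre polynomials `L̃_k^{N(t-1)}` and `L̃_ℓ^{N(s-1)}` are
bi-orthogonal with respect to the pairing
`(p,q) ↦ ∫∫ p(y) κ_{t-s}(y-x) q(x) w_{N(s-1),1}(x) dx dy`, with squared norms
`h_ℓ^{(t,s)} = ℓ! Γ(N(s-1)+ℓ+1)/Γ(N(s-1)+1)`. -/
theorem laguerre_biorthogonal (N : ℕ) (hN : 0 < N) (t s : ℕ) (hs : 0 < s) (hst : s < t)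
    (k l : ℕ) :
    (∫ y : ℝ, ∫ x : ℝ,
        Lag ((N : ℝ) * ((t : ℝ) - 1)) k y * kappa N ((t : ℝ) - s) (y - x)
          * Lag ((N : ℝ) * ((s : ℝ) - 1)) l x * w ((N : ℝ) * ((s : ℝ) - 1)) 1 x)
      = if k = l then
          (l.factorial : ℝ) * Real.Gamma ((N : ℝ) * ((s : ℝ) - 1) + l + 1)
            / Real.Gamma ((N : ℝ) * ((s : ℝ) - 1) + 1)
        else 0 := by
  have hN1 : (1:ℝ) ≤ (N:ℝ) := by exact_mod_cast hN
  have hs1 : (1:ℝ) ≤ (s:ℝ) := by exact_mod_cast hs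
  have hts : (s:ℝ) + 1 ≤ (t:ℝ) := by exact_mod_cast hst
  set a : ℝ := (N:ℝ) * ((s:ℝ) - 1) with ha
  set a' : ℝ := (N:ℝ) * ((t:ℝ) - 1) with ha'
  set c : ℝ := (N:ℝ) * ((t:ℝ) - (s:ℝ)) with hc
  set A : ℝ := a + 1 with hAdef
  have ha0 : 0 ≤ a := by
    rw [ha]; apply mul_nonneg (Nat.cast_nonneg N); linarith
  have hA : 0 < A := by rw [hAdef]; linarith
  have hc1 : 1 ≤ c := by rw [hc]; nlinarith
  have hc0 : 0 < c := by linarith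
  have hAc : a' + 1 = A + c := by rw [hAdef, ha, ha', hc]; ring
  have hAj : ∀ n : ℕ, (0:ℝ) < A + n := fun n => by
    have : (0:ℝ) ≤ (n:ℝ) := Nat.cast_nonneg n
    linarith
  have hBj : ∀ n : ℕ, (0:ℝ) < A + c + n := fun n => by
    have : (0:ℝ) ≤ (n:ℝ) := Nat.cast_nonneg n
    linarith
  have gA : ∀ n : ℕ, Real.Gamma (a + (n:ℝ) + 1) = Real.Gamma (A + n) := fun n => by
    congr 1; rw [hAdef]; ring
  have gB : ∀ n : ℕ, Real.Gamma (a' + (n:ℝ) + 1) = Real.Gamma (A + c + n) := fun n => by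
    congr 1; linarith [hAc]
  have hkap : ∀ z : ℝ, kappa N ((t : ℝ) - s) z = W c z := by
    intro z
    unfold kappa
    rw [w_eq_W]
    congr 1
    rw [hc]; ring
  have hw : ∀ x : ℝ, w a 1 x = W A x := fun x => w_eq_W a x
  -- coefficient functions
  set dcoef : ℕ → ℝ := fun j => (-1:ℝ)^(l-j) * ((l.factorial:ℝ)/(((l-j).factorial:ℕ):ℝ))
      * (Real.Gamma (a + l + 1)/Real.Gamma (a + j + 1)) / (j.factorial:ℝ) with hd
  set ccoef : ℕ → ℝ := fun m => (-1:ℝ)^(k-m) * ((k.factorial:ℝ)/(((k-m).factorial:ℕ):ℝ))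
      * (Real.Gamma (a' + k + 1)/Real.Gamma (a' + m + 1)) / (m.factorial:ℝ) with hcc
  have hLag_l : ∀ x : ℝ, Lag a l x = ∑ j ∈ Finset.range (l+1), dcoef j * x^j := by
    intro x
    unfold Lag
    apply Finset.sum_congr rfl
    intro j _
    rw [hd]
    ring
  have hLag_k : ∀ x : ℝ, Lag a' k x = ∑ m ∈ Finset.range (k+1), ccoef m * x^m := by
    intro x
    unfold Lag
    apply Finset.sum_congr rfl
    intro m _
    rw [hcc]
    ring
  -- inner integral
  have hint : ∀ (y : ℝ) (j : ℕ), Integrable (fun x => W c (y-x) * (x^j * W A x)) := by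
    intro y j
    have hrw : (fun x => W c (y-x) * (x^j * W A x))
        = fun x => (Real.Gamma (A + j) / Real.Gamma A) * (W c (y-x) * W (A + j) x) := by
      funext x
      rw [W_pow_eq hA j]
      ring
    rw [hrw]
    exact (W_conv_integrable hc1 (hAj j) y).const_mul _
  have inner : ∀ y : ℝ,
      (∫ x : ℝ, Lag a' k y * kappa N ((t : ℝ) - s) (y - x) * Lag a l x * w a 1 x)
        = ∑ j ∈ Finset.range (l+1),
            (Lag a' k y * dcoef j)
              * ((Real.Gamma (A + j)/Real.Gamma A) * W (A + c + j) y) := by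
    intro y
    have hpt : ∀ x : ℝ, Lag a' k y * kappa N ((t : ℝ) - s) (y-x) * Lag a l x * w a 1 x
        = ∑ j ∈ Finset.range (l+1),
            (Lag a' k y * dcoef j) * (W c (y-x) * (x^j * W A x)) := by
      intro x
      rw [hkap, hw, hLag_l, Finset.mul_sum, Finset.sum_mul]
      apply Finset.sum_congr rfl
      intro j _
      ring
    have step : (∫ x : ℝ, Lag a' k y * kappa N ((t : ℝ) - s) (y-x) * Lag a l x * w a 1 x)
        = ∫ x : ℝ, ∑ j ∈ Finset.range (l+1),
            (Lag a' k y * dcoef j) * (W c (y-x) * (x^j * W A x)) := by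
      congr 1
      funext x
      exact hpt x
    rw [step, integral_finset_sum _ (fun j _ => (hint y j).const_mul _)]
    apply Finset.sum_congr rfl
    intro j _
    rw [integral_const_mul]
    congr 1
    have hrw : (fun x => W c (y-x) * (x^j * W A x))
        = fun x => (Real.Gamma (A + j) / Real.Gamma A) * (W c (y-x) * W (A + j) x) := by
      funext x
      rw [W_pow_eq hA j]
      ring
    rw [hrw, integral_const_mul, W_conv hc0 (hAj j) y]
    congr 2
    ring
  -- outer integral
  calc (∫ y : ℝ, ∫ x : ℝ,
        Lag a' k y * kappa N ((t : ℝ) - s) (y - x) * Lag a l x * w a 1 x)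
      = ∫ y : ℝ, ∑ j ∈ Finset.range (l+1), ∑ m ∈ Finset.range (k+1),
          (ccoef m * (dcoef j * (Real.Gamma (A + j)/Real.Gamma A)))
            * (y^m * W (A + c + j) y) := by
        congr 1
        funext y
        rw [inner y]
        apply Finset.sum_congr rfl
        intro j _
        rw [hLag_k y, Finset.sum_mul, Finset.sum_mul]
        apply Finset.sum_congr rfl
        intro m _
        ring
    _ = ∑ j ∈ Finset.range (l+1), ∑ m ∈ Finset.range (k+1),
          (ccoef m * (dcoef j * (Real.Gamma (A + j)/Real.Gamma A)))
            * ∫ y : ℝ, y^m * W (A + c + j) y := by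
        rw [integral_finset_sum _ (fun j _ => integrable_finset_sum _
          (fun m _ => (W_pow_integrable (hBj j) m).const_mul _))]
        apply Finset.sum_congr rfl
        intro j _
        rw [integral_finset_sum _ (fun m _ => (W_pow_integrable (hBj j) m).const_mul _)]
        apply Finset.sum_congr rfl
        intro m _
        rw [integral_const_mul]
    _ = ∑ j ∈ Finset.range (l+1), ∑ m ∈ Finset.range (k+1),
          (ccoef m * (dcoef j * (Real.Gamma (A + j)/Real.Gamma A)))
            * (Real.Gamma (A + c + j + m)/Real.Gamma (A + c + j)) := by
        apply Finset.sum_congr rfl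
        intro j _
        apply Finset.sum_congr rfl
        intro m _
        rw [W_moment (hBj j) m]
    _ = if k = l then (l.factorial : ℝ) * Real.Gamma (a + l + 1)
          / Real.Gamma A else 0 := by
        rw [hd, hcc]
        simp only [gA, gB]
        exact algebra_key A c hA hc0 k l
end

section
/- Let t > s > 0 be positive integers, N a positive integer, and s ≤ u < t. Then for every integer k ≥ 0 and every real z, ∫_ℝ L̃_k^{N(t−1)}(y) κ_{t−u}(y−z) dy = L̃_k^{N(u−1)}(z). -/
open MeasureTheory

open PowerSeries Finset Set

/-! ### Combinatorial identity -/

lemma coeff_one_sub_X_pow (M n : ℕ) :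
    (PowerSeries.coeff (R := ℤ) n) ((1 - PowerSeries.X) ^ M) = (-1 : ℤ) ^ n * M.choose n := by
  rw [sub_pow, map_sum]
  have key : ∀ m ∈ range (M + 1),
      (PowerSeries.coeff (R := ℤ) n) ((-1 : ℤ⟦X⟧) ^ (m + M) * 1 ^ m * X ^ (M - m) * (M.choose m : ℤ⟦X⟧))
      = if n = M - m then (-1 : ℤ) ^ (m + M) * M.choose m else 0 := by
    intro m _
    have : ((-1 : ℤ⟦X⟧) ^ (m + M) * 1 ^ m * X ^ (M - m) * (M.choose m : ℤ⟦X⟧))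
        = PowerSeries.C (R := ℤ) ((-1 : ℤ) ^ (m + M) * M.choose m) * X ^ (M - m) := by
      simp only [map_mul, map_pow, map_neg, map_one, map_natCast]
      ring
    rw [this, PowerSeries.coeff_C_mul_X_pow]
  rw [Finset.sum_congr rfl key]
  by_cases hn : n ≤ M
  · rw [Finset.sum_eq_single_of_mem (M - n) (by simp)]
    · rw [if_pos (by omega), Nat.choose_symm hn,
        show M - n + M = n + 2 * (M - n) by omega, pow_add, pow_mul]
      norm_num
    · intro m hm hne
      rw [if_neg]
      simp only [Finset.mem_range] at hm
      omega
  · rw [Finset.sum_eq_zero, Nat.choose_eq_zero_of_lt (by omega), Nat.cast_zero, mul_zero]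
    intro m hm
    simp only [Finset.mem_range] at hm
    rw [if_neg (by omega)]

lemma idA (c Q n : ℕ) (hc : 0 < c) (hcQ : c ≤ Q) :
    ∑ m ∈ Finset.range (n + 1), (-1 : ℤ) ^ m * ((c - 1 + m).choose m) * (Q.choose (n - m))
      = ((Q - c).choose n : ℤ) := by
  have hps : ((1 - PowerSeries.X : ℤ⟦X⟧) ^ (Q - c))
      = (1 - PowerSeries.X) ^ Q * (PowerSeries.invOneSubPow ℤ c).val := by
    have h1 : ((1 - PowerSeries.X : ℤ⟦X⟧) ^ Q)
        = (1 - PowerSeries.X) ^ (Q - c) * (1 - PowerSeries.X) ^ c := by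
      rw [← pow_add]; congr 1; omega
    have h2 : ((1 - PowerSeries.X : ℤ⟦X⟧)) ^ c * (PowerSeries.invOneSubPow ℤ c).val = 1 := by
      rw [← PowerSeries.invOneSubPow_inv_eq_one_sub_pow, Units.inv_eq_val_inv, Units.inv_mul]
    rw [h1, mul_assoc, h2, mul_one]
  have hcoeff := congrArg (PowerSeries.coeff (R := ℤ) n) hps
  rw [coeff_one_sub_X_pow, PowerSeries.coeff_mul,
    Finset.Nat.sum_antidiagonal_eq_sum_range_succ_mk] at hcoeff
  simp only [coeff_one_sub_X_pow,
    PowerSeries.invOneSubPow_val_eq_mk_sub_one_add_choose_of_pos _ _ hc,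
    PowerSeries.coeff_mk, Nat.succ_eq_add_one] at hcoeff
  have hrefl := Finset.sum_range_reflect
    (fun m => (-1 : ℤ) ^ m * ((c - 1 + m).choose m) * (Q.choose (n - m))) (n + 1)
  simp only [Nat.add_sub_cancel] at hrefl
  rw [← hrefl]
  have hterm : ∀ m ∈ Finset.range (n + 1),
      (-1 : ℤ) ^ (n - m) * ((c - 1 + (n - m)).choose (n - m)) * (Q.choose (n - (n - m)))
      = (-1 : ℤ) ^ n * ((-1 : ℤ) ^ m * (Q.choose m) * ((c - 1 + (n - m)).choose (c - 1))) := by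
    intro m hm
    simp only [Finset.mem_range] at hm
    rw [show n - (n - m) = m by omega,
      ← Nat.choose_symm (Nat.le_add_left (n - m) (c - 1)), Nat.add_sub_cancel]
    have hs : (-1 : ℤ) ^ (n - m) = (-1) ^ n * (-1) ^ m := by
      rw [← pow_add, show n + m = n - m + 2 * m by omega, pow_add, pow_mul]
      norm_num
    rw [hs]; ring
  rw [Finset.sum_congr rfl hterm, ← Finset.mul_sum, ← hcoeff, ← mul_assoc, ← mul_pow]
  norm_num

/-! ### The kernel -/

noncomputable def K (c : ℕ) (x : ℝ) : ℝ :=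
  if 0 < x then x ^ (c - 1) * Real.exp (-x) / ((c - 1).factorial : ℝ) else 0

lemma pow_mul_K_eq (c m : ℕ) (hc : 0 < c) :
    (fun x : ℝ => x ^ m * K c x)
      = Set.indicator (Set.Ioi 0)
          (fun x : ℝ => (Real.exp (-x) * x ^ (((c + m : ℕ) : ℝ) - 1)) / ((c - 1).factorial : ℝ)) := by
  funext x
  rw [Set.indicator_apply]
  simp only [Set.mem_Ioi, K]
  by_cases hx : 0 < x
  · rw [if_pos hx, if_pos hx]
    have he : (((c + m : ℕ) : ℝ) - 1) = ((c - 1 + m : ℕ) : ℝ) := by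
      push_cast [Nat.cast_sub hc]
      ring
    rw [he, Real.rpow_natCast, pow_add]
    ring
  · rw [if_neg hx, if_neg hx, mul_zero]

lemma integrable_pow_mul_K (c m : ℕ) (hc : 0 < c) :
    Integrable (fun x : ℝ => x ^ m * K c x) := by
  rw [pow_mul_K_eq c m hc]
  rw [integrable_indicator_iff measurableSet_Ioi]
  exact ((Real.GammaIntegral_convergent (by positivity : (0:ℝ) < ((c + m : ℕ) : ℝ))).div_const _)

lemma integral_pow_mul_K (c m : ℕ) (hc : 0 < c) :
    ∫ x : ℝ, x ^ m * K c x = ((c - 1 + m).factorial : ℝ) / ((c - 1).factorial : ℝ) := by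
  rw [pow_mul_K_eq c m hc, integral_indicator measurableSet_Ioi, integral_div,
    ← Real.Gamma_eq_integral (by positivity : (0:ℝ) < ((c + m : ℕ) : ℝ))]
  rw [show ((c + m : ℕ) : ℝ) = ((c - 1 + m : ℕ) : ℝ) + 1 by push_cast [Nat.cast_sub hc]; ring,
    Real.Gamma_nat_eq_factorial]

lemma kappa_eq_K (N : ℕ) (τ : ℝ) (c : ℕ) (hc : 0 < c) (h : (N : ℝ) * τ = c) :
    kappa N τ = K c := by
  funext x
  rw [kappa, w, K]
  by_cases hx : 0 < x
  · rw [if_pos hx, if_pos hx]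
    have e1 : (N : ℝ) * τ - 1 = (c : ℝ) - 1 := by rw [h]
    rw [e1, Real.one_rpow,
      show (c : ℝ) - 1 = ((c - 1 : ℕ) : ℝ) by push_cast [Nat.cast_sub hc]; ring,
      Real.rpow_natCast,
      show ((c - 1 : ℕ) : ℝ) + 1 = ((c - 1 : ℕ) : ℝ) + 1 from rfl,
      Real.Gamma_nat_eq_factorial]
    ring
  · rw [if_neg hx, if_neg hx]

/-! ### Laguerre coefficients -/

noncomputable def LagC (a k i : ℕ) : ℝ :=
  (-1 : ℝ) ^ (k - i) * ((k.factorial : ℝ) / ((k - i).factorial : ℝ))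
    * (((a + k).factorial : ℝ) / ((a + i).factorial : ℝ)) / (i.factorial : ℝ)

lemma Lag_nat (a k : ℕ) (x : ℝ) :
    Lag (a : ℝ) k x = ∑ i ∈ Finset.range (k + 1), LagC a k i * x ^ i := by
  rw [Lag]
  refine Finset.sum_congr rfl fun i _ => ?_
  rw [LagC, show (a : ℝ) + k + 1 = ((a + k : ℕ) : ℝ) + 1 by push_cast; ring,
    show (a : ℝ) + i + 1 = ((a + i : ℕ) : ℝ) + 1 by push_cast; ring,
    Real.Gamma_nat_eq_factorial, Real.Gamma_nat_eq_factorial]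
  ring

/-! ### per-term identity -/

lemma term_eq (b c j n m : ℕ) (hc : 0 < c) (hm : m ≤ n) :
    LagC (b + c) (j + n) (j + m) * (((j + m).choose j : ℕ) : ℝ)
        * (((c - 1 + m).factorial : ℝ) / ((c - 1).factorial : ℝ))
      = ((-1 : ℝ) ^ n * (((j + n).factorial : ℝ) / (j.factorial : ℝ)))
        * ((((-1 : ℤ) ^ m * ((c - 1 + m).choose m) * ((b + c + (j + n)).choose (n - m)) : ℤ)) : ℝ) := by
  obtain ⟨r, rfl⟩ : ∃ r, n = m + r := ⟨n - m, by omega⟩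
  rw [LagC]
  simp only [show j + (m + r) - (j + m) = r from by omega,
    show m + r - m = r from by omega]
  push_cast
  rw [Nat.cast_choose ℝ (show j ≤ j + m by omega),
    Nat.cast_choose ℝ (show m ≤ c - 1 + m by omega),
    Nat.cast_choose ℝ (show r ≤ b + c + (j + (m + r)) by omega)]
  simp only [show j + m - j = m from by omega, show c - 1 + m - m = c - 1 from by omega,
    show b + c + (j + (m + r)) - r = b + c + (j + m) from by omega]
  have hsign : (-1 : ℝ) ^ (m + r) * (-1 : ℝ) ^ m = (-1 : ℝ) ^ r := by
    rw [← pow_add, show m + r + m = r + 2 * m by omega, pow_add, pow_mul]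
    norm_num
  have h1 : ((j + m).factorial : ℝ) ≠ 0 := Nat.cast_ne_zero.mpr (Nat.factorial_ne_zero _)
  have h2 : ((c - 1).factorial : ℝ) ≠ 0 := Nat.cast_ne_zero.mpr (Nat.factorial_ne_zero _)
  have h3 : (j.factorial : ℝ) ≠ 0 := Nat.cast_ne_zero.mpr (Nat.factorial_ne_zero _)
  have h4 : (m.factorial : ℝ) ≠ 0 := Nat.cast_ne_zero.mpr (Nat.factorial_ne_zero _)
  have h5 : (r.factorial : ℝ) ≠ 0 := Nat.cast_ne_zero.mpr (Nat.factorial_ne_zero _)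
  have h6 : ((b + c + (j + m)).factorial : ℝ) ≠ 0 := Nat.cast_ne_zero.mpr (Nat.factorial_ne_zero _)
  have h7 : ((c - 1 + m).factorial : ℝ) ≠ 0 := Nat.cast_ne_zero.mpr (Nat.factorial_ne_zero _)
  rw [← hsign]
  field_simp

/-! ### coefficient identity -/

lemma coeff_id (b c k j : ℕ) (hc : 0 < c) (hj : j ≤ k) :
    ∑ i ∈ Finset.range (k + 1),
        LagC (b + c) k i * ((i.choose j : ℕ) : ℝ)
          * (((c - 1 + (i - j)).factorial : ℝ) / ((c - 1).factorial : ℝ))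
      = LagC b k j := by
  obtain ⟨n, rfl⟩ : ∃ n, k = j + n := ⟨k - j, by omega⟩
  have hsub : Finset.Ico j (j + n + 1) ⊆ Finset.range (j + n + 1) := by
    intro i hi
    simp only [Finset.mem_Ico] at hi
    simp only [Finset.mem_range]
    omega
  rw [← Finset.sum_subset hsub (by
    intro i hi hni
    simp only [Finset.mem_range] at hi
    simp only [Finset.mem_Ico] at hni
    have : i < j := by omega
    rw [Nat.choose_eq_zero_of_lt this]
    simp)]
  rw [Finset.sum_Ico_eq_sum_range]
  simp only [show j + n + 1 - j = n + 1 from by omega, show ∀ m : ℕ, j + m - j = m from fun m => by omega]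
  have hterm : ∀ m ∈ Finset.range (n + 1),
      LagC (b + c) (j + n) (j + m) * (((j + m).choose j : ℕ) : ℝ)
          * (((c - 1 + m).factorial : ℝ) / ((c - 1).factorial : ℝ))
        = ((-1 : ℝ) ^ n * (((j + n).factorial : ℝ) / (j.factorial : ℝ)))
          * ((((-1 : ℤ) ^ m * ((c - 1 + m).choose m) * ((b + c + (j + n)).choose (n - m)) : ℤ)) : ℝ) := by
    intro m hm
    simp only [Finset.mem_range] at hm
    exact term_eq b c j n m hc (by omega)
  rw [Finset.sum_congr rfl hterm, ← Finset.mul_sum, ← Int.cast_sum,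
    idA c (b + c + (j + n)) n hc (by omega),
    show b + c + (j + n) - c = b + (j + n) from by omega]
  rw [Int.cast_natCast]
  rw [LagC, show j + n - j = n from by omega,
    Nat.cast_choose ℝ (show n ≤ b + (j + n) by omega),
    show b + (j + n) - n = b + j from by omega]
  have h1 : ((b + j).factorial : ℝ) ≠ 0 := Nat.cast_ne_zero.mpr (Nat.factorial_ne_zero _)
  have h2 : (j.factorial : ℝ) ≠ 0 := Nat.cast_ne_zero.mpr (Nat.factorial_ne_zero _)
  have h3 : (n.factorial : ℝ) ≠ 0 := Nat.cast_ne_zero.mpr (Nat.factorial_ne_zero _)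
  field_simp

/-! ### the main computation -/

lemma key (b c k : ℕ) (hc : 0 < c) (z : ℝ) :
    (∫ y : ℝ, Lag ((b + c : ℕ) : ℝ) k y * K c (y - z)) = Lag (b : ℝ) k z := by
  set a : ℕ := b + c with ha
  -- translation
  have htrans : (∫ y : ℝ, Lag (a : ℝ) k y * K c (y - z))
      = ∫ x : ℝ, Lag (a : ℝ) k (x + z) * K c x := by
    have h := MeasureTheory.integral_sub_right_eq_self (μ := volume)
      (fun x : ℝ => Lag (a : ℝ) k (x + z) * K c x) z
    simp only [sub_add_cancel] at h
    exact h
  rw [htrans]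
  -- expand the integrand
  have hLag : ∀ x : ℝ, Lag (a : ℝ) k (x + z) * K c x
      = ∑ i ∈ Finset.range (k + 1), ∑ jj ∈ Finset.range (i + 1),
          (LagC a k i * ((i.choose jj : ℕ) : ℝ) * z ^ (i - jj)) * (x ^ jj * K c x) := by
    intro x
    rw [Lag_nat, Finset.sum_mul]
    refine Finset.sum_congr rfl fun i _ => ?_
    rw [add_pow, Finset.mul_sum, Finset.sum_mul]
    refine Finset.sum_congr rfl fun jj _ => ?_
    ring
  simp only [hLag]
  rw [integral_finset_sum _ (fun i _ => integrable_finset_sum _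
    (fun jj _ => ((integrable_pow_mul_K c jj hc).const_mul _)))]
  have hin : ∀ i ∈ Finset.range (k + 1),
      (∫ x : ℝ, ∑ jj ∈ Finset.range (i + 1),
        (LagC a k i * ((i.choose jj : ℕ) : ℝ) * z ^ (i - jj)) * (x ^ jj * K c x))
      = ∑ jj ∈ Finset.range (i + 1),
          (LagC a k i * ((i.choose jj : ℕ) : ℝ) * z ^ (i - jj))
            * (((c - 1 + jj).factorial : ℝ) / ((c - 1).factorial : ℝ)) := by
    intro i _
    rw [integral_finset_sum _ (fun jj _ => ((integrable_pow_mul_K c jj hc).const_mul _))]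
    refine Finset.sum_congr rfl fun jj _ => ?_
    rw [integral_const_mul, integral_pow_mul_K c jj hc]
  rw [Finset.sum_congr rfl hin]
  -- reflect the inner sum and pad
  have hre : ∀ i ∈ Finset.range (k + 1),
      (∑ jj ∈ Finset.range (i + 1),
          (LagC a k i * ((i.choose jj : ℕ) : ℝ) * z ^ (i - jj))
            * (((c - 1 + jj).factorial : ℝ) / ((c - 1).factorial : ℝ)))
      = ∑ jj ∈ Finset.range (k + 1),
          (LagC a k i * ((i.choose jj : ℕ) : ℝ)
            * (((c - 1 + (i - jj)).factorial : ℝ) / ((c - 1).factorial : ℝ))) * z ^ jj := by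
    intro i hi
    simp only [Finset.mem_range] at hi
    rw [← Finset.sum_range_reflect]
    have h1 : ∀ jj ∈ Finset.range (i + 1),
        (LagC a k i * ((i.choose (i - jj) : ℕ) : ℝ) * z ^ (i - (i - jj)))
          * (((c - 1 + (i - jj)).factorial : ℝ) / ((c - 1).factorial : ℝ))
        = (LagC a k i * ((i.choose jj : ℕ) : ℝ)
            * (((c - 1 + (i - jj)).factorial : ℝ) / ((c - 1).factorial : ℝ))) * z ^ jj := by
      intro jj hjj
      simp only [Finset.mem_range] at hjj
      rw [Nat.choose_symm (by omega : jj ≤ i), show i - (i - jj) = jj from by omega]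
      ring
    simp only [Nat.add_sub_cancel]
    rw [Finset.sum_congr rfl h1]
    refine Finset.sum_subset (by intro x hx; simp only [Finset.mem_range] at *; omega) ?_
    intro jj hjj hnjj
    simp only [Finset.mem_range] at hjj hnjj
    rw [Nat.choose_eq_zero_of_lt (by omega)]
    simp
  rw [Finset.sum_congr rfl hre, Finset.sum_comm]
  have hcol : ∀ jj ∈ Finset.range (k + 1),
      (∑ i ∈ Finset.range (k + 1),
        (LagC a k i * ((i.choose jj : ℕ) : ℝ)
          * (((c - 1 + (i - jj)).factorial : ℝ) / ((c - 1).factorial : ℝ))) * z ^ jj)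
      = LagC b k jj * z ^ jj := by
    intro jj hjj
    simp only [Finset.mem_range] at hjj
    rw [← Finset.sum_mul, coeff_id b c k jj hc (by omega)]
  rw [Finset.sum_congr rfl hcol, ← Lag_nat]

/-- For positive integers `t > s > 0` and `s ≤ u < t`,
`∫ L̃_k^{N(t-1)}(y) κ_{t-u}(y-z) dy = L̃_k^{N(u-1)}(z)`. -/
theorem laguerre_P_transform (N : ℕ) (hN : 0 < N) (t s u : ℕ) (hs : 0 < s) (hst : s < t)
    (hsu : s ≤ u) (hut : u < t) (k : ℕ) (z : ℝ) :
    (∫ y : ℝ, Lag ((N : ℝ) * ((t : ℝ) - 1)) k y * kappa N ((t : ℝ) - u) (y - z))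
      = Lag ((N : ℝ) * ((u : ℝ) - 1)) k z := by
  have hu1 : 1 ≤ u := le_trans hs hsu
  have ht1 : 1 ≤ t := by omega
  set b : ℕ := N * (u - 1) with hb
  set c : ℕ := N * (t - u) with hcdef
  have hc : 0 < c := Nat.mul_pos hN (by omega)
  have hA : (N : ℝ) * ((t : ℝ) - 1) = ((b + c : ℕ) : ℝ) := by
    rw [hb, hcdef, ← Nat.mul_add]
    push_cast [Nat.cast_sub ht1, show u - 1 + (t - u) = t - 1 from by omega]
    ring
  have hB : (N : ℝ) * ((u : ℝ) - 1) = (b : ℝ) := by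
    rw [hb]
    push_cast [Nat.cast_sub hu1]
    ring
  have hker : kappa N ((t : ℝ) - u) = K c := by
    refine kappa_eq_K N _ c hc ?_
    rw [hcdef]
    push_cast [Nat.cast_sub hut.le]
    ring
  rw [hA, hB, hker]
  exact key b c k hc z
end

section
/- Let k ≥ 0 be a fixed integer and b ∈ ℝ a fixed constant. Then lim_{a→∞} (2a)^{−k/2} · L̃_k^{a+b}( √(2a) x + a ) = H̃_k(x) for every real x, where L̃_k^{a+b} is the monic Laguerre polynomial of degree k with index a+b and H̃_k is the monic Hermite polynomial of degree k. -/
open Finset Filter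

/-- The monic Hermite polynomial
`H̃_k(x) = Σ_{j=0}^{⌊k/2⌋} (-1)^j (k!/(j!(k-2j)!)) x^{k-2j}/2^{2j}`. -/
noncomputable def Herm (k : ℕ) (x : ℝ) : ℝ :=
  ∑ j ∈ Finset.range (k / 2 + 1),
    (-1 : ℝ) ^ j * ((k.factorial : ℝ) / ((j.factorial : ℝ) * ((k - 2 * j).factorial : ℝ)))
      * x ^ (k - 2 * j) / 2 ^ (2 * j)

noncomputable def LagP (a : ℝ) (n : ℕ) (x : ℝ) : ℝ :=
  ∑ k ∈ Finset.range (n + 1),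
    (-1 : ℝ) ^ (n + k) * (n.choose k : ℝ) * (∏ i ∈ Finset.Ico k n, (a + 1 + i)) * x ^ k

lemma coefS (n j : ℕ) (hj : j ≤ n + 1) (a : ℝ) :
    (((n+2).choose (j+1) : ℕ) : ℝ) * ∏ i ∈ Ico (j+1) (n+2), (a + 1 + i) =
      (((n+1).choose j : ℕ) : ℝ) * ∏ i ∈ Ico j (n+1), (a + 1 + i)
      + (2*(n:ℝ)+3+a) * (((n+1).choose (j+1) : ℕ) : ℝ) * ∏ i ∈ Ico (j+1) (n+1), (a + 1 + i)
      - ((n:ℝ)+1)*((n:ℝ)+1+a) * ((n.choose (j+1) : ℕ) : ℝ) * ∏ i ∈ Ico (j+1) n, (a + 1 + i) := by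
  rcases lt_or_ge j n with hjn | hjn
  · -- j + 1 ≤ n
    have h1 : j + 1 ≤ n := hjn
    set Q : ℝ := ∏ i ∈ Ico (j+1) n, (a + 1 + i) with hQ
    have p1 : ∏ i ∈ Ico (j+1) (n+1), (a + 1 + i) = Q * (a + 1 + n) :=
      Finset.prod_Ico_succ_top h1 _
    have p2 : ∏ i ∈ Ico (j+1) (n+2), (a + 1 + i) = Q * (a + 1 + n) * (a + 1 + (n+1)) := by
      rw [Finset.prod_Ico_succ_top (by omega : j + 1 ≤ n + 1), p1]
      push_cast; ring
    have p3 : ∏ i ∈ Ico j (n+1), (a + 1 + i) = (a + 1 + j) * (Q * (a + 1 + n)) := by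
      rw [Finset.prod_eq_prod_Ico_succ_bot (by omega : j < n + 1), p1]
    have pas2 : (((n+2).choose (j+1) : ℕ) : ℝ) = ((n+1).choose j : ℕ) + (((n+1).choose (j+1) : ℕ) : ℝ) := by
      rw [show n + 2 = (n+1) + 1 from rfl, Nat.choose_succ_succ]; push_cast; ring
    have pas1 : (((n+1).choose (j+1) : ℕ) : ℝ) = (n.choose j : ℕ) + ((n.choose (j+1) : ℕ) : ℝ) := by
      rw [Nat.choose_succ_succ]; push_cast; ring
    have habs : (((n+1).choose j : ℕ) : ℝ) * ((n:ℝ) + 1 - j) = ((n:ℝ)+1) * (n.choose j : ℕ) := by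
      have := Nat.choose_mul_succ_eq n j
      have hcast : (((n.choose j) * (n+1) : ℕ) : ℝ) = (((n+1).choose j * (n + 1 - j) : ℕ) : ℝ) := by
        exact_mod_cast this
      push_cast [Nat.cast_sub (by omega : j ≤ n + 1)] at hcast
      linarith
    rw [p1, p2, p3]
    linear_combination ((a+(n:ℝ)+1)*(a+(n:ℝ)+2)*Q) * pas2 + ((a+(n:ℝ)+1)*Q) * habs
      - (((n:ℝ)+1)*(a+(n:ℝ)+1)*Q) * pas1
  · rcases Nat.eq_or_lt_of_le hjn with h | h
    · -- j = n
      subst h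
      have e1 : Ico (n+1) (n+2) = {n+1} := by
        ext m; simp only [Finset.mem_Ico, Finset.mem_singleton]; omega
      have e2 : Ico n (n+1) = {n} := by
        ext m; simp only [Finset.mem_Ico, Finset.mem_singleton]; omega
      have e3 : Ico (n+1) (n+1) = (∅ : Finset ℕ) := Finset.Ico_self _
      have e4 : Ico (n+1) n = (∅ : Finset ℕ) := by
        ext m; simp only [Finset.mem_Ico, Finset.notMem_empty, iff_false, not_and, not_lt]; omega
      rw [e1, e2, e3, e4]
      simp only [Finset.prod_singleton, Finset.prod_empty]
      rw [Nat.choose_succ_self_right, Nat.choose_succ_self_right, Nat.choose_self,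
        Nat.choose_eq_zero_of_lt (by omega)]
      push_cast; ring
    · -- j = n + 1
      have hj2 : j = n + 1 := by omega
      subst hj2
      have e1 : Ico (n+1+1) (n+2) = (∅ : Finset ℕ) := by
        ext m; simp only [Finset.mem_Ico, Finset.notMem_empty, iff_false, not_and, not_lt]; omega
      have e2 : Ico (n+1) (n+1) = (∅ : Finset ℕ) := Finset.Ico_self _
      have e3 : Ico (n+1+1) (n+1) = (∅ : Finset ℕ) := by
        ext m; simp only [Finset.mem_Ico, Finset.notMem_empty, iff_false, not_and, not_lt]; omega
      have e4 : Ico (n+1+1) n = (∅ : Finset ℕ) := by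
        ext m; simp only [Finset.mem_Ico, Finset.notMem_empty, iff_false, not_and, not_lt]; omega
      have c1 : (n+2).choose (n+1+1) = 1 := by
        rw [show n+1+1 = n+2 from rfl]; exact Nat.choose_self _
      have c3 : (n+1).choose (n+1+1) = 0 := Nat.choose_eq_zero_of_lt (by omega)
      have c4 : n.choose (n+1+1) = 0 := Nat.choose_eq_zero_of_lt (by omega)
      rw [e1, e2, e3, e4, c1, c3, c4, Nat.choose_self]
      simp

lemma coef0 (n : ℕ) (a : ℝ) :
    (((n+2).choose 0 : ℕ) : ℝ) * ∏ i ∈ Ico 0 (n+2), (a + 1 + i) =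
      (2*(n:ℝ)+3+a) * (((n+1).choose 0 : ℕ) : ℝ) * ∏ i ∈ Ico 0 (n+1), (a + 1 + i)
      - ((n:ℝ)+1)*((n:ℝ)+1+a) * ((n.choose 0 : ℕ) : ℝ) * ∏ i ∈ Ico 0 n, (a + 1 + i) := by
  have p1 : ∏ i ∈ Ico 0 (n+1), (a + 1 + i) = (∏ i ∈ Ico 0 n, (a + 1 + i)) * (a + 1 + n) :=
    Finset.prod_Ico_succ_top (Nat.zero_le _) _
  have p2 : ∏ i ∈ Ico 0 (n+2), (a + 1 + i) = (∏ i ∈ Ico 0 n, (a + 1 + i)) * (a + 1 + n) * (a + 1 + (n+1)) := by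
    rw [Finset.prod_Ico_succ_top (Nat.zero_le _), p1]; push_cast; ring
  rw [p1, p2, Nat.choose_zero_right, Nat.choose_zero_right, Nat.choose_zero_right]
  push_cast; ring

lemma lagP_rec (a x : ℝ) (n : ℕ) :
    LagP a (n+2) x = (x - (2*((n:ℝ)+1) + a + 1)) * LagP a (n+1) x
      - ((n:ℝ)+1) * ((n:ℝ)+1+a) * LagP a n x := by
  unfold LagP
  have hx : (x - (2*((n:ℝ)+1) + a + 1)) * (∑ k ∈ Finset.range (n+2),
      (-1 : ℝ) ^ (n+1+k) * ((n+1).choose k : ℝ) * (∏ i ∈ Finset.Ico k (n+1), (a + 1 + i)) * x ^ k)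
      = (∑ k ∈ Finset.range (n+2),
        (-1 : ℝ) ^ (n+1+k) * ((n+1).choose k : ℝ) * (∏ i ∈ Finset.Ico k (n+1), (a + 1 + i)) * x ^ (k+1))
      - (2*((n:ℝ)+1) + a + 1) * (∑ k ∈ Finset.range (n+2),
        (-1 : ℝ) ^ (n+1+k) * ((n+1).choose k : ℝ) * (∏ i ∈ Finset.Ico k (n+1), (a + 1 + i)) * x ^ k) := by
    rw [sub_mul, Finset.mul_sum]
    congr 1
    apply Finset.sum_congr rfl
    intro k _
    ring
  rw [hx]
  -- shift sum
  have hshift : (∑ k ∈ Finset.range (n+2),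
      (-1 : ℝ) ^ (n+1+k) * ((n+1).choose k : ℝ) * (∏ i ∈ Finset.Ico k (n+1), (a + 1 + i)) * x ^ (k+1))
      = ∑ k ∈ Finset.range (n+3), (fun k => if k = 0 then 0 else
        (-1 : ℝ) ^ (n+k) * ((n+1).choose (k-1) : ℝ) * (∏ i ∈ Finset.Ico (k-1) (n+1), (a + 1 + i)) * x ^ k) k := by
    rw [Finset.sum_range_succ' _ (n+2)]
    simp only [Nat.succ_ne_zero, if_false, if_pos, Nat.add_sub_cancel, reduceIte, add_zero]
    apply Finset.sum_congr rfl
    intro k _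
    ring
  rw [hshift]
  -- extend the (n+1)-sum to range (n+3)
  have hext1 : (∑ k ∈ Finset.range (n+2),
      (-1 : ℝ) ^ (n+1+k) * ((n+1).choose k : ℝ) * (∏ i ∈ Finset.Ico k (n+1), (a + 1 + i)) * x ^ k)
      = ∑ k ∈ Finset.range (n+3),
      (-1 : ℝ) ^ (n+1+k) * ((n+1).choose k : ℝ) * (∏ i ∈ Finset.Ico k (n+1), (a + 1 + i)) * x ^ k := by
    rw [Finset.sum_range_succ _ (n+2), Nat.choose_eq_zero_of_lt (by omega : n+1 < n+2)]
    simp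
  have hext0 : (∑ k ∈ Finset.range (n+1),
      (-1 : ℝ) ^ (n+k) * (n.choose k : ℝ) * (∏ i ∈ Finset.Ico k n, (a + 1 + i)) * x ^ k)
      = ∑ k ∈ Finset.range (n+3),
      (-1 : ℝ) ^ (n+k) * (n.choose k : ℝ) * (∏ i ∈ Finset.Ico k n, (a + 1 + i)) * x ^ k := by
    rw [Finset.sum_range_succ _ (n+2), Finset.sum_range_succ _ (n+1),
      Nat.choose_eq_zero_of_lt (by omega : n < n+1), Nat.choose_eq_zero_of_lt (by omega : n < n+2)]
    simp
  rw [hext1, hext0, Finset.mul_sum, Finset.mul_sum, ← Finset.sum_sub_distrib, ← Finset.sum_sub_distrib]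
  apply Finset.sum_congr rfl
  intro k hk
  have hk' : k ≤ n + 2 := by simp at hk; omega
  rcases k with _ | j
  · simp only [if_pos rfl]
    have h0 := coef0 n a
    push_cast at h0 ⊢
    linear_combination ((-1 : ℝ)^n) * h0
  · simp only [if_neg (Nat.succ_ne_zero _), Nat.add_sub_cancel]
    have hj : j ≤ n + 1 := by omega
    have hS := coefS n j hj a
    push_cast at hS ⊢
    linear_combination ((-1 : ℝ)^(n+j+1) * x^(j+1)) * hS

noncomputable def HG (m j : ℕ) (x : ℝ) : ℝ :=
  if 2 * j ≤ m then
    (-1 : ℝ) ^ j * ((m.factorial : ℝ) / ((j.factorial : ℝ) * ((m - 2 * j).factorial : ℝ)))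
      * x ^ (m - 2 * j) / 2 ^ (2 * j)
  else 0

lemma herm_eq (k : ℕ) (x : ℝ) : Herm k x = ∑ j ∈ Finset.range (k + 1), HG k j x := by
  rw [Herm]
  rw [← Finset.sum_subset (Finset.range_subset_range.2 (by omega : k/2 + 1 ≤ k + 1))
    (fun j _ hj => by
      have : ¬ 2 * j ≤ k := by simp at hj ⊢; omega
      simp [HG, this])]
  apply Finset.sum_congr rfl
  intro j hj
  have : 2 * j ≤ k := by simp at hj; omega
  simp [HG, this]

lemma herm_rec (n : ℕ) (x : ℝ) :
    Herm (n+2) x = x * Herm (n+1) x - ((n:ℝ)+1)/2 * Herm n x := by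
  rw [herm_eq, herm_eq, herm_eq]
  have h1 : x * ∑ j ∈ Finset.range (n+2), HG (n+1) j x
      = ∑ j ∈ Finset.range (n+3), x * HG (n+1) j x := by
    rw [Finset.mul_sum, Finset.sum_range_succ _ (n+2)]
    have : HG (n+1) (n+2) x = 0 := by
      simp [HG, show ¬ 2*(n+2) ≤ n+1 by omega]
    rw [this, mul_zero, add_zero]
  have h0 : (∑ j ∈ Finset.range (n+1), HG n j x)
      = ∑ j ∈ Finset.range (n+3), (fun j => if j = 0 then 0 else HG n (j-1) x) j := by
    rw [Finset.sum_range_succ' _ (n+2)]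
    simp only [Nat.succ_ne_zero, if_false, reduceIte, Nat.add_sub_cancel, add_zero]
    rw [Finset.sum_range_succ _ (n+1)]
    have : HG n (n+1) x = 0 := by simp [HG, show ¬ 2*(n+1) ≤ n by omega]
    rw [this, add_zero]
  rw [h1, h0, Finset.mul_sum, ← Finset.sum_sub_distrib]
  apply Finset.sum_congr rfl
  intro j hj
  have hj' : j ≤ n + 2 := by simp at hj; omega
  rcases j with _ | i
  · -- j = 0
    simp only [if_pos rfl, mul_zero, sub_zero]
    simp only [HG, show 2*0 ≤ n + 2 by omega, show 2*0 ≤ n + 1 by omega, if_pos, reduceIte,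
      Nat.mul_zero, Nat.sub_zero, pow_zero, Nat.factorial_zero]
    have hf2 : (((n+2).factorial : ℕ) : ℝ) ≠ 0 := Nat.cast_ne_zero.2 (Nat.factorial_ne_zero _)
    have hf1 : (((n+1).factorial : ℕ) : ℝ) ≠ 0 := Nat.cast_ne_zero.2 (Nat.factorial_ne_zero _)
    field_simp
    ring
  · simp only [if_neg (Nat.succ_ne_zero _), Nat.add_sub_cancel]
    rcases le_or_gt (2*(i+1)) (n+1) with hc | hc
    · -- all guards true
      obtain ⟨e, he⟩ : ∃ e, n = 2*i + e + 1 := ⟨n - 2*i - 1, by omega⟩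
      have g2 : 2*(i+1) ≤ n+2 := by omega
      have g1 : 2*(i+1) ≤ n+1 := hc
      have g0 : 2*i ≤ n := by omega
      simp only [HG, if_pos g2, if_pos g1, if_pos g0]
      rw [show n + 2 - 2*(i+1) = e + 1 by omega, show n + 1 - 2*(i+1) = e by omega,
        show n - 2*i = e + 1 by omega]
      have F2 : ((n+2).factorial : ℝ) = ((n:ℝ)+2) * ((n+1).factorial : ℝ) := by
        rw [show n+2 = (n+1)+1 from rfl, Nat.factorial_succ]; push_cast; ring
      have F1 : ((n+1).factorial : ℝ) = ((n:ℝ)+1) * (n.factorial : ℝ) := by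
        rw [Nat.factorial_succ]; push_cast; ring
      have FI : ((i+1).factorial : ℝ) = ((i:ℝ)+1) * (i.factorial : ℝ) := by
        rw [Nat.factorial_succ]; push_cast; ring
      have FE : ((e+1).factorial : ℝ) = ((e:ℝ)+1) * (e.factorial : ℝ) := by
        rw [Nat.factorial_succ]; push_cast; ring
      have hn : (n:ℝ) = 2*(i:ℝ) + (e:ℝ) + 1 := by rw [he]; push_cast; ring
      rw [F2, F1, FI, FE, hn]
      have hif : (i.factorial : ℝ) ≠ 0 := Nat.cast_ne_zero.2 (Nat.factorial_ne_zero _)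
      have hef : (e.factorial : ℝ) ≠ 0 := Nat.cast_ne_zero.2 (Nat.factorial_ne_zero _)
      have hnf : (n.factorial : ℝ) ≠ 0 := Nat.cast_ne_zero.2 (Nat.factorial_ne_zero _)
      field_simp
      ring
    · rcases le_or_gt (2*(i+1)) (n+2) with hc2 | hc2
      · -- 2(i+1) = n+2, n = 2i
        have hni : n = 2*i := by omega
        have g2 : 2*(i+1) ≤ n+2 := hc2
        have g1 : ¬ 2*(i+1) ≤ n+1 := by omega
        have g0 : 2*i ≤ n := by omega
        simp only [HG, if_pos g2, if_neg g1, if_pos g0, mul_zero]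
        rw [show n + 2 - 2*(i+1) = 0 by omega, show n - 2*i = 0 by omega]
        have F2 : ((n+2).factorial : ℝ) = ((n:ℝ)+2) * (((n:ℝ)+1)) * (n.factorial : ℝ) := by
          rw [show n+2 = (n+1)+1 from rfl, Nat.factorial_succ, Nat.factorial_succ]; push_cast; ring
        have FI : ((i+1).factorial : ℝ) = ((i:ℝ)+1) * (i.factorial : ℝ) := by
          rw [Nat.factorial_succ]; push_cast; ring
        have hn : (n:ℝ) = 2*(i:ℝ) := by rw [hni]; push_cast; ring
        rw [F2, FI, hn]
        have hif : (i.factorial : ℝ) ≠ 0 := Nat.cast_ne_zero.2 (Nat.factorial_ne_zero _)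
        have hnf : (n.factorial : ℝ) ≠ 0 := Nat.cast_ne_zero.2 (Nat.factorial_ne_zero _)
        field_simp
        ring
      · -- all guards false
        have g2 : ¬ 2*(i+1) ≤ n+2 := by omega
        have g1 : ¬ 2*(i+1) ≤ n+1 := by omega
        have g0 : ¬ 2*i ≤ n := by omega
        simp [HG, g2, g1, g0]

lemma gamma_prod (a : ℝ) (ha : 0 < a) (n : ℕ) :
    Real.Gamma (a + n + 1) = Real.Gamma (a + 1) * ∏ i ∈ Finset.range n, (a + 1 + i) := by
  induction n with
  | zero => simp
  | succ n ih =>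
    have h1 : a + (n+1 : ℕ) + 1 = (a + n + 1) + 1 := by push_cast; ring
    rw [h1, Real.Gamma_add_one (by positivity : a + (n:ℝ) + 1 ≠ 0), ih,
      Finset.prod_range_succ]
    ring
lemma gamma_ratio_s16 (a : ℝ) (ha : 0 < a) {k n : ℕ} (hkn : k ≤ n) :
    Real.Gamma (a + n + 1) / Real.Gamma (a + k + 1) = ∏ i ∈ Finset.Ico k n, (a + 1 + i) := by
  rw [gamma_prod a ha n, gamma_prod a ha k, ← Finset.prod_range_mul_prod_Ico _ hkn]
  have h1 : Real.Gamma (a + 1) ≠ 0 := (Real.Gamma_pos_of_pos (by linarith)).ne'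
  have h2 : (∏ i ∈ Finset.range k, (a + 1 + i)) ≠ 0 := by
    apply Finset.prod_ne_zero_iff.2
    intro i _
    positivity
  field_simp

lemma lag_eq_lagP (a : ℝ) (ha : 0 < a) (n : ℕ) (x : ℝ) : Lag a n x = LagP a n x := by
  unfold Lag LagP
  apply Finset.sum_congr rfl
  intro k hk
  have hkn : k ≤ n := by simp at hk; omega
  rw [gamma_ratio_s16 a ha hkn]
  have hs : (-1 : ℝ) ^ (n - k) = (-1 : ℝ) ^ (n + k) := by
    have h : n + k = (n - k) + 2 * k := by omega
    rw [h, pow_add, pow_mul, neg_one_sq, one_pow, mul_one]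
  rw [hs]
  have hfac : (n.factorial : ℝ) = (n.choose k : ℝ) * (k.factorial : ℝ) * ((n-k).factorial : ℝ) := by
    exact_mod_cast (Nat.choose_mul_factorial_mul_factorial hkn).symm
  have h1 : ((n-k).factorial : ℝ) ≠ 0 := Nat.cast_ne_zero.2 (Nat.factorial_ne_zero _)
  have h2 : ((k).factorial : ℝ) ≠ 0 := Nat.cast_ne_zero.2 (Nat.factorial_ne_zero _)
  rw [hfac]
  field_simp

lemma step_alg (n : ℕ) (S A L1 L0 x a b : ℝ) (hS : S ≠ 0) (hA : A ≠ 0)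
    (hSS : S * S = 2 * a) :
    (A * (S * S))⁻¹ * (((S * x + a) - (2*((n:ℝ)+1) + (a+b) + 1)) * L1
        - ((n:ℝ)+1) * ((n:ℝ)+1+(a+b)) * L0)
    = (x - (2*(n:ℝ)+b+3) * S⁻¹) * ((A * S)⁻¹ * L1)
      - (((n:ℝ)+1) * (((n:ℝ)+1+b) * (S⁻¹ * S⁻¹) + 1/2)) * (A⁻¹ * L0) := by
  have ha : a = S * S / 2 := by linarith
  subst ha
  field_simp
  ring

lemma tendsto_sqrt_two_mul : Tendsto (fun a : ℝ => Real.sqrt (2 * a)) atTop atTop := by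
  have h2a : Tendsto (fun a : ℝ => 2 * a) atTop atTop :=
    tendsto_id.const_mul_atTop two_pos
  have := (tendsto_rpow_atTop (by norm_num : (0:ℝ) < 1/2)).comp h2a
  exact this.congr (fun a => (Real.sqrt_eq_rpow _).symm)

lemma tendsto_sqrt_inv : Tendsto (fun a : ℝ => (Real.sqrt (2 * a))⁻¹) atTop (nhds 0) :=
  tendsto_sqrt_two_mul.inv_tendsto_atTop

theorem mainP (k : ℕ) (b x : ℝ) :
    Tendsto (fun a : ℝ => ((2 * a) ^ ((k : ℝ) / 2))⁻¹ * LagP (a + b) k (Real.sqrt (2 * a) * x + a))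
      atTop (nhds (Herm k x)) := by
  induction k using Nat.twoStepInduction with
  | zero =>
    have e : (fun a : ℝ => ((2 * a) ^ (((0:ℕ) : ℝ) / 2))⁻¹ * LagP (a + b) 0 (Real.sqrt (2 * a) * x + a))
        = fun _ => (1 : ℝ) := by
      funext a
      simp [LagP]
    rw [e, show Herm 0 x = 1 by simp [Herm]]
    exact tendsto_const_nhds
  | one =>
    have hL : ∀ (a' y : ℝ), LagP a' 1 y = y - (a' + 1) := by
      intro a' y
      rw [LagP, Finset.sum_range_succ, Finset.sum_range_succ, Finset.sum_range_zero]
      simp [Finset.Ico_self]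
      ring
    have hlim : Tendsto (fun a : ℝ => x - (b+1) * (Real.sqrt (2*a))⁻¹) atTop (nhds (Herm 1 x)) := by
      have : Tendsto (fun a : ℝ => x - (b+1) * (Real.sqrt (2*a))⁻¹) atTop (nhds (x - (b+1) * 0)) :=
        tendsto_const_nhds.sub (tendsto_sqrt_inv.const_mul _)
      simpa [Herm] using this
    apply hlim.congr'
    filter_upwards [eventually_gt_atTop (0:ℝ)] with a ha
    have h2a : (0:ℝ) < 2 * a := by linarith
    have hS : Real.sqrt (2*a) ≠ 0 := (Real.sqrt_pos.2 h2a).ne'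
    rw [hL]
    rw [show ((2*a : ℝ)) ^ (((1:ℕ):ℝ)/2) = Real.sqrt (2*a) by
      rw [Real.sqrt_eq_rpow]; norm_num]
    field_simp
    ring
  | more n ihn ihn1 =>
    have hg1 : Tendsto (fun a : ℝ => x - (2*(n:ℝ)+b+3) * (Real.sqrt (2*a))⁻¹) atTop
        (nhds (x - (2*(n:ℝ)+b+3) * 0)) :=
      tendsto_const_nhds.sub (tendsto_sqrt_inv.const_mul _)
    have hg2 : Tendsto (fun a : ℝ => ((n:ℝ)+1) * (((n:ℝ)+1+b) * ((Real.sqrt (2*a))⁻¹ * (Real.sqrt (2*a))⁻¹) + 1/2))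
        atTop (nhds (((n:ℝ)+1) * (((n:ℝ)+1+b) * ((0:ℝ) * 0) + 1/2))) :=
      (((tendsto_sqrt_inv.mul tendsto_sqrt_inv).const_mul _).add tendsto_const_nhds).const_mul _
    have total := (hg1.mul ihn1).sub (hg2.mul ihn)
    have hval : (x - (2*(n:ℝ)+b+3) * 0) * Herm (n+1) x
        - (((n:ℝ)+1) * (((n:ℝ)+1+b) * ((0:ℝ) * 0) + 1/2)) * Herm n x = Herm (n+2) x := by
      rw [herm_rec]; ring
    rw [hval] at total
    apply total.congr'
    filter_upwards [eventually_gt_atTop (0:ℝ)] with a ha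
    have h2a : (0:ℝ) < 2 * a := by linarith
    have hS0 : (0:ℝ) < Real.sqrt (2*a) := Real.sqrt_pos.2 h2a
    have hS : Real.sqrt (2*a) ≠ 0 := hS0.ne'
    have hA0 : (0:ℝ) < (2*a) ^ ((n:ℝ)/2) := Real.rpow_pos_of_pos h2a _
    have hA : ((2*a) ^ ((n:ℝ)/2)) ≠ 0 := hA0.ne'
    have hSS : Real.sqrt (2*a) * Real.sqrt (2*a) = 2 * a := Real.mul_self_sqrt h2a.le
    have e1 : (2*a) ^ ((((n+1):ℕ):ℝ)/2) = (2*a) ^ ((n:ℝ)/2) * Real.sqrt (2*a) := by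
      rw [show ((((n+1):ℕ)):ℝ)/2 = (n:ℝ)/2 + 1/2 by push_cast; ring, Real.rpow_add h2a,
        Real.sqrt_eq_rpow]
    have e2 : (2*a) ^ ((((n+2):ℕ):ℝ)/2) = (2*a) ^ ((n:ℝ)/2) * (Real.sqrt (2*a) * Real.sqrt (2*a)) := by
      rw [show ((((n+2):ℕ)):ℝ)/2 = (n:ℝ)/2 + 1 by push_cast; ring, Real.rpow_add h2a,
        Real.rpow_one, hSS]
    rw [lagP_rec, e1, e2]
    exact (step_alg n (Real.sqrt (2*a)) ((2*a) ^ ((n:ℝ)/2)) _ _ x a b hS hA hSS).symm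


/-- Asymptotics of Laguerre polynomials: for fixed `k` and `b`,
`(2a)^{-k/2} L̃_k^{a+b}(√(2a) x + a) → H̃_k(x)` as `a → ∞`. -/
theorem laguerre_to_hermite (k : ℕ) (b : ℝ) (x : ℝ) :
    Filter.Tendsto
      (fun a : ℝ => ((2 * a) ^ ((k : ℝ) / 2))⁻¹ * Lag (a + b) k (Real.sqrt (2 * a) * x + a))
      Filter.atTop (nhds (Herm k x)) := by
  apply (mainP k b x).congr'
  filter_upwards [eventually_gt_atTop (max 0 (-b))] with a ha
  have hab : 0 < a + b := by
    have := lt_of_le_of_lt (le_max_right 0 (-b)) ha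
    linarith
  rw [lag_eq_lagP (a + b) hab]
end
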